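/- arXiv:2109.09400 — 4 statements merged into one kernel-verified Lean document; each statement's English description precedes it below -/
import Mathlib

section
/- Let Z ⊆ U_r and let Z° denote the set of all freely reduced words in F_r whose cyclically reduced forms belong to Z. If Z is exponentially negligible in U_r then Z° is exponentially negligible in F_r. -/
open scoped Classical

noncomputable section

/-- The free group of rank `r`, with free basis indexed by `Fin r`. -/
abbrev F (r : ℕ) := FreeGroup (Fin r)

/-- The freely reduced length of an element of the free group. -/
def wlen {r : ℕ} (w : F r) : ℕ := (FreeGroup.toWord w).length

/-- An element is cyclically reduced if the first letter of its reduced word is not the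
inverse of the last letter. -/
def CyclicallyReduced {r : ℕ} (w : F r) : Prop :=
  ∀ x ∈ (FreeGroup.toWord w).head?, ∀ y ∈ (FreeGroup.toWord w).getLast?, x ≠ (y.1, !y.2)

/-- The set of cyclically reduced elements of `F r`. -/
def Ur (r : ℕ) : Set (F r) := {w | CyclicallyReduced w}

/-- An element of a group is primitive if it belongs to some free basis of the group. -/
def IsPrimitive {G : Type} [Group G] (g : G) : Prop :=
  ∃ (ι : Type) (b : FreeGroupBasis ι G) (i : ι), b i = g

/-- `HasRank G n` says that `G` is free of rank `n` (with `n = ⊤` for infinite rank). -/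
def HasRank (G : Type) [Group G] (n : ℕ∞) : Prop :=
  ∃ (ι : Type) (_b : FreeGroupBasis ι G), Cardinal.toENat (Cardinal.mk ι) = n

/-- The primitivity rank of `g`: the smallest rank of a subgroup containing `g` as a
non-primitive element (`⊤ = ∞` if there is none). -/
def primitivityRank {r : ℕ} (g : F r) : ℕ∞ :=
  sInf {n : ℕ∞ | ∃ (H : Subgroup (F r)) (hg : g ∈ H),
    ¬ IsPrimitive (⟨g, hg⟩ : H) ∧ HasRank H n}

/-- The critical set of `g`: subgroups containing `g` as a non-primitive element whose rank
equals the primitivity rank of `g`. -/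
def Crit {r : ℕ} (g : F r) : Set (Subgroup (F r)) :=
  {H | ∃ hg : g ∈ H, ¬ IsPrimitive (⟨g, hg⟩ : H) ∧ HasRank H (primitivityRank g)}

/-- `gam S n` is the number of elements of `S` of reduced length exactly `n`. -/
def gam {r : ℕ} (S : Set (F r)) (n : ℕ) : ℕ := {w ∈ S | wlen w = n}.ncard

/-- `rho S n` is the number of elements of `S` of reduced length at most `n`. -/
def rho {r : ℕ} (S : Set (F r)) (n : ℕ) : ℕ := {w ∈ S | wlen w ≤ n}.ncard

/-- A sequence of reals converges to `l` exponentially fast. -/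
def ExpFast (x : ℕ → ℝ) (l : ℝ) : Prop :=
  ∃ C : ℝ, 0 < C ∧ ∃ σ : ℝ, 0 < σ ∧ σ < 1 ∧ ∀ n : ℕ, |x n - l| ≤ C * σ ^ n

/-- `S` is exponentially negligible in `Z`. -/
def ExpNegligibleIn {r : ℕ} (S Z : Set (F r)) : Prop :=
  ExpFast (fun n => (rho S n : ℝ) / (rho Z n : ℝ)) 0

/-- `S` is exponentially generic in `Z`. -/
def ExpGenericIn {r : ℕ} (S Z : Set (F r)) : Prop :=
  ExpNegligibleIn (Z \ S) Z

/-- `u` is the cyclically reduced form of `w`: `u` is cyclically reduced, conjugate to `w`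
via `w = g u g⁻¹`, with no cancellation (`|w| = |u| + 2|g|`), as produced by cyclic reduction. -/
def IsCyclicallyReducedFormOf {r : ℕ} (u w : F r) : Prop :=
  CyclicallyReduced u ∧ ∃ g : F r, w = g * u * g⁻¹ ∧ wlen w = wlen u + 2 * wlen g

/-- `Zcirc Z` is the set of all elements of `F r` whose cyclically reduced form lies in `Z`. -/
def Zcirc {r : ℕ} (Z : Set (F r)) : Set (F r) :=
  {w | ∃ u ∈ Z, IsCyclicallyReducedFormOf u w}



namespace ZcircAux

variable {α : Type*} [DecidableEq α]

/-- `Rel a b` means `b` does not cancel `a`. -/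
def Rel (a b : α × Bool) : Prop := ¬(a.1 = b.1 ∧ a.2 = !b.2)

lemma reduce_eq_self_of_chain' : ∀ {l : List (α × Bool)}, l.Chain' Rel → FreeGroup.reduce l = l
  | [], _ => rfl
  | [a], _ => rfl
  | a :: b :: t, h => by
      have ht : FreeGroup.reduce (b :: t) = b :: t :=
        reduce_eq_self_of_chain' h.tail
      have hab : Rel a b := (List.isChain_cons_cons.mp h).1
      rw [FreeGroup.reduce.cons, ht]
      show (if a.1 = b.1 ∧ a.2 = !b.2 then t else a :: b :: t) = a :: b :: t
      exact if_neg hab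

lemma chain'_of_reduce_eq_self : ∀ {l : List (α × Bool)}, FreeGroup.reduce l = l → l.Chain' Rel
  | [], _ => List.isChain_nil
  | a :: t, h => by
      rw [FreeGroup.reduce.cons] at h
      rcases ht : FreeGroup.reduce t with _ | ⟨b, t2⟩
      · rw [ht] at h
        have h' : [a] = a :: t := h
        have : t = [] := by
          have := congrArg List.length h'
          simp at this
          exact this
        subst this; exact List.isChain_singleton a
      · rw [ht] at h
        have h' : (if a.1 = b.1 ∧ a.2 = !b.2 then t2 else a :: b :: t2) = a :: t := h
        by_cases hc : a.1 = b.1 ∧ a.2 = !b.2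
        · rw [if_pos hc] at h'
          have h1 : (b :: t2).length ≤ t.length := ht ▸ FreeGroup.Red.length_le FreeGroup.reduce.red
          have h2 := congrArg List.length h'
          simp at h1 h2
          omega
        · rw [if_neg hc] at h'
          have h3 : t = b :: t2 := by
            have := congrArg List.tail h'
            simpa using this.symm
          have ht' : FreeGroup.reduce t = t := by rw [ht, h3]
          have hch := chain'_of_reduce_eq_self ht'
          subst h3
          exact List.isChain_cons_cons.mpr ⟨hc, hch⟩

lemma chain'_toWord (x : FreeGroup α) : x.toWord.Chain' Rel :=
  chain'_of_reduce_eq_self (FreeGroup.reduce_toWord x)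

lemma toWord_mk_eq {l : List (α × Bool)} (h : l.Chain' Rel) : (FreeGroup.mk l).toWord = l :=
  (FreeGroup.toWord_mk).trans (reduce_eq_self_of_chain' h)

end ZcircAux

namespace ZcircAux

variable {r : ℕ}

lemma rel_iff (a b : Fin r × Bool) : Rel a b ↔ b ≠ (a.1, !a.2) := by
  unfold Rel
  constructor
  · rintro h rfl
    exact h ⟨rfl, by simp⟩
  · rintro h ⟨h1, h2⟩
    exact h (Prod.ext_iff.mpr ⟨h1.symm, by rw [h2]; simp⟩)

lemma card_rel (a : Fin r × Bool) : Fintype.card {b : Fin r × Bool // Rel a b} = 2 * r - 1 := by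
  rw [Fintype.card_congr (Equiv.subtypeEquivRight (fun b => rel_iff a b))]
  rw [Fintype.card_subtype_compl, Fintype.card_subtype_eq]
  simp [mul_comm]

/-- Encoding equivalence for non-cancelling next letters. -/
def eEquiv (a : Fin r × Bool) : {b : Fin r × Bool // Rel a b} ≃ Fin (2 * r - 1) :=
  Fintype.equivFinOfCardEq (card_rel a)

/-- Encode a word as (head, list of step-codes). -/
def encode (hr : 0 < r) : List (Fin r × Bool) → List (Fin (2 * r - 1))
  | [] => []
  | [_] => []
  | a :: b :: t =>
      (if h : Rel a b then eEquiv a ⟨b, h⟩ else ⟨0, by omega⟩) :: encode hr (b :: t)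

lemma encode_length (hr : 0 < r) :
    ∀ l : List (Fin r × Bool), (encode hr l).length = l.length - 1
  | [] => rfl
  | [_] => rfl
  | a :: b :: t => by
      show (encode hr (a :: b :: t)).length = _
      rw [encode]
      simp [encode_length hr (b :: t)]

lemma encode_inj (hr : 0 < r) :
    ∀ {l₁ l₂ : List (Fin r × Bool)}, l₁.Chain' Rel → l₂.Chain' Rel →
      l₁.head? = l₂.head? → encode hr l₁ = encode hr l₂ → l₁ = l₂
  | [], [], _, _, _, _ => rfl
  | [], _ :: _, _, _, hh, _ => by simp at hh
  | _ :: _, [], _, _, hh, _ => by simp at hh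
  | [a], [b], _, _, hh, _ => by simp_all
  | [a], b :: c :: t, _, _, hh, he => by
      rw [encode, encode] at he; simp at he
  | a :: b :: t, [c], _, _, hh, he => by
      rw [encode, encode] at he; simp at he
  | a :: b :: t₁, c :: d :: t₂, h₁, h₂, hh, he => by
      have hac : a = c := by simpa using hh
      subst hac
      have hab : Rel a b := (List.isChain_cons_cons.mp h₁).1
      have had : Rel a d := (List.isChain_cons_cons.mp h₂).1
      rw [encode, encode, dif_pos hab, dif_pos had] at he
      simp only [List.cons.injEq] at he
      have hbd : b = d := congrArg Subtype.val ((eEquiv a).injective he.1)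
      subst hbd
      have h3 := encode_inj hr h₁.tail h₂.tail rfl he.2
      simp only [List.tail_cons] at h3
      rw [h3]

/-- Build a reduced word from a head letter and a list of step-codes. -/
def build (a : Fin r × Bool) : List (Fin (2 * r - 1)) → List (Fin r × Bool)
  | [] => [a]
  | j :: t => a :: build ((eEquiv a).symm j).1 t

lemma build_length (a : Fin r × Bool) :
    ∀ t : List (Fin (2 * r - 1)), (build a t).length = t.length + 1
  | [] => rfl
  | j :: t => by rw [build]; simp [build_length _ t]

lemma build_head (a : Fin r × Bool) (t : List (Fin (2 * r - 1))) :
    (build a t).head? = some a := by cases t <;> rfl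

lemma build_chain' : ∀ (t : List (Fin (2 * r - 1))) (a : Fin r × Bool),
    (build a t).Chain' Rel
  | [], a => List.isChain_singleton a
  | j :: t, a => by
      rw [build]
      have h1 := build_chain' t ((eEquiv a).symm j).1
      have h2 : Rel a ((eEquiv a).symm j).1 := ((eEquiv a).symm j).2
      cases ht : build ((eEquiv a).symm j).1 t with
      | nil => exact List.isChain_singleton a
      | cons x xs =>
          have hx : x = ((eEquiv a).symm j).1 := by
            have := build_head ((eEquiv a).symm j).1 t
            rw [ht] at this; simpa using this
          rw [ht] at h1
          exact List.isChain_cons_cons.mpr ⟨hx ▸ h2, h1⟩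

lemma build_inj : ∀ (t₁ : List (Fin (2 * r - 1))) (a₁ a₂ : Fin r × Bool)
    (t₂ : List (Fin (2 * r - 1))), build a₁ t₁ = build a₂ t₂ → a₁ = a₂ ∧ t₁ = t₂
  | [], a₁, a₂, [], h => by simp [build] at h; exact ⟨h, rfl⟩
  | [], a₁, a₂, j :: t, h => by
      have := congrArg List.length h
      rw [build_length, build_length] at this; simp at this
  | j :: t, a₁, a₂, [], h => by
      have := congrArg List.length h
      rw [build_length, build_length] at this; simp at this
  | j₁ :: t₁, a₁, a₂, j₂ :: t₂, h => by
      rw [build, build] at h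
      simp only [List.cons.injEq] at h
      obtain ⟨ha, hb⟩ := h
      subst ha
      obtain ⟨hv, ht⟩ := build_inj t₁ _ _ t₂ hb
      have : j₁ = j₂ := by
        apply (eEquiv a₁).symm.injective
        exact Subtype.ext hv
      exact ⟨rfl, by rw [this, ht]⟩

end ZcircAux

namespace ZcircAux

lemma geom_le {q : ℕ} (hq : 2 ≤ q) (n : ℕ) : ∑ i ∈ Finset.range n, q ^ i ≤ q ^ n := by
  induction n with
  | zero => simp
  | succ n ih =>
      rw [Finset.sum_range_succ, pow_succ]
      have h2 : q ^ n * 2 ≤ q ^ n * q := Nat.mul_le_mul_left _ hq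
      omega

lemma ncard_prod {α β : Type*} (s : Set α) (t : Set β) :
    (s ×ˢ t).ncard = s.ncard * t.ncard := by
  rw [← Nat.card_coe_set_eq, ← Nat.card_coe_set_eq, ← Nat.card_coe_set_eq,
    ← Nat.card_prod]
  exact Nat.card_congr (Equiv.Set.prod s t)

lemma ncard_eq_sum_fibers {α : Type*} (s : Set α) (hs : s.Finite) (f : α → ℕ) (n : ℕ)
    (hf : ∀ a ∈ s, f a ≤ n) :
    s.ncard = ∑ k ∈ Finset.range (n + 1), {a ∈ s | f a = k}.ncard := by
  classical
  rw [Set.ncard_eq_toFinset_card s hs]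
  rw [Finset.card_eq_sum_card_fiberwise (f := f) (t := Finset.range (n + 1))
    (fun a ha => Finset.mem_range.mpr (Nat.lt_succ_of_le (hf a (hs.mem_toFinset.mp ha))))]
  refine Finset.sum_congr rfl fun k _ => ?_
  rw [Set.ncard_eq_toFinset_card _ (hs.subset (Set.sep_subset s _))]
  congr 1
  ext a
  simp [Set.Finite.mem_toFinset]

lemma length_set_ncard {β : Type*} [Fintype β] (k : ℕ) :
    {l : List β | l.length = k}.ncard = Fintype.card β ^ k := by
  rw [← Nat.card_coe_set_eq]
  have e : ↥{l : List β | l.length = k} ≃ List.Vector β k :=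
    Equiv.subtypeEquivRight (fun _ => Iff.rfl)
  rw [Nat.card_congr e, Nat.card_eq_fintype_card, card_vector]

lemma ncard_range_eq {α β : Type*} {f : α → β} (hf : Function.Injective f) :
    (Set.range f).ncard = Nat.card α := by
  rw [← Nat.card_coe_set_eq]
  exact (Nat.card_congr (Equiv.ofInjective f hf)).symm

end ZcircAux

open ZcircAux in
lemma ball_finite (r n : ℕ) : {w : F r | wlen w ≤ n}.Finite := by
  have h : {w : F r | wlen w ≤ n} = FreeGroup.toWord ⁻¹' {l | l.length ≤ n} := rfl
  rw [h]
  exact (List.finite_length_le _ n).preimage FreeGroup.toWord_injective.injOn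

open ZcircAux in
lemma wlen_eq_zero {r : ℕ} {w : F r} : wlen w = 0 ↔ w = 1 := by
  rw [wlen, List.length_eq_zero_iff, FreeGroup.toWord_eq_nil_iff]

open ZcircAux in
lemma sphere_ncard_le (r : ℕ) (hr : 2 ≤ r) (k : ℕ) :
    {w : F r | wlen w = k + 1}.ncard ≤ (2 * r + 1) * (2 * r - 1) ^ k := by
  have hr' : 0 < r := by omega
  set T := (Set.univ : Set (Option (Fin r × Bool))) ×ˢ
      {l : List (Fin (2 * r - 1)) | l.length = k} with hT
  have hTfin : T.Finite := Set.finite_univ.prod (List.finite_length_eq _ k)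
  have hle : {w : F r | wlen w = k + 1}.ncard ≤ T.ncard := by
    refine Set.ncard_le_ncard_of_injOn
      (fun w => ((FreeGroup.toWord w).head?, encode hr' (FreeGroup.toWord w))) ?_ ?_ hTfin
    · intro w hw
      refine Set.mk_mem_prod (Set.mem_univ _) ?_
      simp only [Set.mem_setOf_eq, encode_length]
      have : (FreeGroup.toWord w).length = k + 1 := hw
      omega
    · intro w₁ h₁ w₂ h₂ hww
      simp only [Prod.mk.injEq] at hww
      exact FreeGroup.toWord_injective
        (encode_inj hr' (chain'_toWord w₁) (chain'_toWord w₂) hww.1 hww.2)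
  refine hle.trans ?_
  rw [hT, ncard_prod, Set.ncard_univ, length_set_ncard, Nat.card_eq_fintype_card]
  have hc1 : Fintype.card (Option (Fin r × Bool)) = 2 * r + 1 := by
    simp [mul_comm]
  have hc2 : Fintype.card (Fin (2 * r - 1)) = 2 * r - 1 := by simp
  rw [hc1, hc2]

open ZcircAux in
lemma rho_univ_le (r : ℕ) (hr : 2 ≤ r) (m : ℕ) :
    rho (Set.univ : Set (F r)) m ≤ (4 * r + 2) * (2 * r - 1) ^ m := by
  have hq : 2 ≤ 2 * r - 1 := by omega
  have h1 : {w : F r | w ∈ Set.univ ∧ wlen w ≤ m} = {w : F r | wlen w ≤ m} := by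
    ext w; simp
  rw [rho, h1]
  rw [ncard_eq_sum_fibers _ (ball_finite r m) wlen m (fun a ha => ha)]
  have hbound : ∀ k ∈ Finset.range (m + 1),
      {a ∈ {w : F r | wlen w ≤ m} | wlen a = k}.ncard ≤
        (2 * r + 1) * (2 * r - 1) ^ (k - 1) := by
    intro k _
    by_cases hk : k = 0
    · subst hk
      have hsub : {a ∈ {w : F r | wlen w ≤ m} | wlen a = 0} ⊆ {(1 : F r)} := by
        intro a ha
        simp only [Set.mem_singleton_iff]
        exact wlen_eq_zero.mp ha.2
      have := (Set.ncard_le_ncard hsub (Set.finite_singleton _)).trans_eq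
        (Set.ncard_singleton _)
      have hp : 1 ≤ (2 * r + 1) * (2 * r - 1) ^ (0 - 1) := by
        simp only [Nat.zero_sub, pow_zero, mul_one]
        omega
      omega
    · obtain ⟨j, rfl⟩ : ∃ j, k = j + 1 := ⟨k - 1, by omega⟩
      simp only [Nat.add_sub_cancel]
      refine (Set.ncard_le_ncard ?_ ?_).trans (sphere_ncard_le r hr j)
      · exact fun a ha => ha.2
      · exact (ball_finite r (j + 1)).subset (fun a ha => le_of_eq ha)
  refine (Finset.sum_le_sum hbound).trans ?_
  rw [Finset.sum_range_succ']
  have h2 : ∑ i ∈ Finset.range m, (2 * r + 1) * (2 * r - 1) ^ (i + 1 - 1) =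
      (2 * r + 1) * ∑ i ∈ Finset.range m, (2 * r - 1) ^ i := by
    simp only [Nat.add_sub_cancel]
    rw [Finset.mul_sum]
  have h3 : (2 * r + 1) * ∑ i ∈ Finset.range m, (2 * r - 1) ^ i ≤
      (2 * r + 1) * (2 * r - 1) ^ m := Nat.mul_le_mul_left _ (geom_le hq m)
  have h5 : 1 ≤ (2 * r - 1) ^ m := Nat.one_le_pow _ _ (by omega)
  have h6 : (4 * r + 2) * (2 * r - 1) ^ m =
      (2 * r + 1) * (2 * r - 1) ^ m + (2 * r + 1) * (2 * r - 1) ^ m := by ring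
  have h7 : 2 * r + 1 ≤ (2 * r + 1) * (2 * r - 1) ^ m :=
    Nat.le_mul_of_pos_right _ (by omega)
  simp only [Nat.zero_sub, pow_zero, mul_one] at *
  omega

open ZcircAux in
lemma rho_univ_ge (r : ℕ) (hr : 2 ≤ r) (n : ℕ) :
    (2 * r - 1) ^ n ≤ rho (Set.univ : Set (F r)) n := by
  have hq : 2 ≤ 2 * r - 1 := by omega
  have hfin : {w : F r | w ∈ Set.univ ∧ wlen w ≤ n}.Finite :=
    (ball_finite r n).subset (fun a ha => ha.2)
  cases n with
  | zero =>
      simp only [pow_zero, rho]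
      exact (Set.ncard_pos hfin).mpr ⟨1, Set.mem_univ _, by simp [wlen_eq_zero]⟩
  | succ m =>
      set eA : (Fin r × Bool) ≃ Fin (2 * r) :=
        Fintype.equivFinOfCardEq (by simp [mul_comm]) with heA
      set emb : Fin (2 * r - 1) → Fin r × Bool :=
        fun j => eA.symm (Fin.castLE (by omega) j) with hemb
      have hembinj : Function.Injective emb := by
        intro x y hxy
        have := eA.symm.injective hxy
        exact Fin.castLE_injective _ this
      set φ : Fin (2 * r - 1) × (Fin m → Fin (2 * r - 1)) → F r :=
        fun p => FreeGroup.mk (build (emb p.1) (List.ofFn p.2)) with hφ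
      have hφw : ∀ p, FreeGroup.toWord (φ p) = build (emb p.1) (List.ofFn p.2) :=
        fun p => toWord_mk_eq (build_chain' _ _)
      have hφinj : Function.Injective φ := by
        intro p₁ p₂ hp
        have h1 : build (emb p₁.1) (List.ofFn p₁.2) = build (emb p₂.1) (List.ofFn p₂.2) := by
          rw [← hφw p₁, ← hφw p₂, hp]
        obtain ⟨h2, h3⟩ := build_inj _ _ _ _ h1
        have h4 : p₁.1 = p₂.1 := hembinj h2
        have h5 : p₁.2 = p₂.2 := List.ofFn_injective h3
        exact Prod.ext h4 h5
      have hsub : Set.range φ ⊆ {w : F r | w ∈ Set.univ ∧ wlen w ≤ m + 1} := by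
        rintro w ⟨p, rfl⟩
        refine ⟨Set.mem_univ _, ?_⟩
        rw [wlen, hφw p, build_length]
        simp
      calc (2 * r - 1) ^ (m + 1)
          = Nat.card (Fin (2 * r - 1) × (Fin m → Fin (2 * r - 1))) := by
            simp [Nat.card_eq_fintype_card, pow_succ, mul_comm]
        _ = (Set.range φ).ncard := (ncard_range_eq hφinj).symm
        _ ≤ _ := Set.ncard_le_ncard hsub hfin


open ZcircAux in
lemma one_le_rho_Ur (r m : ℕ) : 1 ≤ rho (Ur r) m := by
  have hfin : {w : F r | w ∈ Ur r ∧ wlen w ≤ m}.Finite :=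
    (ball_finite r m).subset (fun a ha => ha.2)
  refine (Set.ncard_pos hfin).mpr ⟨1, ?_, by simp [wlen, FreeGroup.toWord_one]⟩
  intro x hx
  rw [FreeGroup.toWord_one] at hx
  exact (Option.not_mem_none x hx).elim

lemma rho_mono {r : ℕ} {S S' : Set (F r)} (hS : S ⊆ S') (m : ℕ) : rho S m ≤ rho S' m := by
  refine Set.ncard_le_ncard (fun w hw => ⟨hS hw.1, hw.2⟩) ?_
  exact (ball_finite r m).subset (fun a ha => ha.2)

open ZcircAux in
lemma rho_zcirc_le (r : ℕ) (Z : Set (F r)) (n : ℕ) :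
    rho (Zcirc Z) n ≤ ∑ k ∈ Finset.range (n + 1),
      {w : F r | wlen w = k}.ncard * {u ∈ Z | wlen u + 2 * k ≤ n}.ncard := by
  classical
  set s : Set (F r) := {w | w ∈ Zcirc Z ∧ wlen w ≤ n} with hs
  set T : Set (F r × F r) := {p | p.2 ∈ Z ∧ wlen p.2 + 2 * wlen p.1 ≤ n} with hT
  have hTfin : T.Finite := by
    refine (((ball_finite r n).prod (ball_finite r n)).subset ?_)
    rintro ⟨g, u⟩ ⟨h1, h2⟩
    have h2' : wlen u + 2 * wlen g ≤ n := h2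
    exact ⟨show wlen g ≤ n by omega, show wlen u ≤ n by omega⟩
  -- choice functions
  have key : ∀ w ∈ Zcirc Z, ∃ p : F r × F r, p.2 ∈ Z ∧
      w = p.1 * p.2 * p.1⁻¹ ∧ wlen w = wlen p.2 + 2 * wlen p.1 := by
    rintro w ⟨u, huZ, _, g, hg1, hg2⟩
    exact ⟨(g, u), huZ, hg1, hg2⟩
  set f : F r → F r × F r := fun w =>
    if hw : w ∈ Zcirc Z then (key w hw).choose else (1, 1) with hf
  have hstep : rho (Zcirc Z) n ≤ T.ncard := by
    refine Set.ncard_le_ncard_of_injOn f ?_ ?_ hTfin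
    · rintro w ⟨hw, hwn⟩
      simp only [hf, dif_pos hw]
      obtain ⟨h1, _, h3⟩ := (key w hw).choose_spec
      exact ⟨h1, by omega⟩
    · rintro w₁ ⟨hw₁, _⟩ w₂ ⟨hw₂, _⟩ hff
      simp only [hf, dif_pos hw₁, dif_pos hw₂] at hff
      obtain ⟨_, he₁, _⟩ := (key w₁ hw₁).choose_spec
      obtain ⟨_, he₂, _⟩ := (key w₂ hw₂).choose_spec
      rw [he₁, he₂, hff]
  refine hstep.trans ?_
  rw [ncard_eq_sum_fibers T hTfin (fun p => wlen p.1) n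
    (fun p hp => by have h := hp.2; show wlen p.1 ≤ n; omega)]
  refine Finset.sum_le_sum fun k _ => ?_
  have hsub : {p ∈ T | wlen p.1 = k} ⊆
      {w : F r | wlen w = k} ×ˢ {u ∈ Z | wlen u + 2 * k ≤ n} := by
    rintro ⟨g, u⟩ ⟨hp, h3⟩
    have h1 : u ∈ Z := hp.1
    have h2 : wlen u + 2 * wlen g ≤ n := hp.2
    have h3' : wlen g = k := h3
    exact Set.mk_mem_prod h3' ⟨h1, show wlen u + 2 * k ≤ n by omega⟩
  have hfin2 : ({w : F r | wlen w = k} ×ˢ {u ∈ Z | wlen u + 2 * k ≤ n}).Finite := by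
    refine Set.Finite.prod ((ball_finite r k).subset fun a ha => le_of_eq ha) ?_
    exact (ball_finite r n).subset fun a ha =>
      show wlen a ≤ n by have h := ha.2; omega
  exact (Set.ncard_le_ncard hsub hfin2).trans_eq (ncard_prod _ _)

/-- If `Z ⊆ U_r` is exponentially negligible in `U_r`, then `Z°` is
exponentially negligible in `F_r`. -/
theorem zcirc_expNegligible (r : ℕ) (hr : 2 ≤ r) (Z : Set (F r)) (hZ : Z ⊆ Ur r)
    (h : ExpNegligibleIn Z (Ur r)) :
    ExpNegligibleIn (Zcirc Z) Set.univ := by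
  classical
  obtain ⟨C₀, hC₀, σ₀, hσ₀, hσ₀1, hb⟩ := h
  have hq3 : 3 ≤ 2 * r - 1 := by omega
  set qR : ℝ := ((2 * r - 1 : ℕ) : ℝ) with hqRdef
  have hqR3 : (3 : ℝ) ≤ qR := by rw [hqRdef]; exact_mod_cast hq3
  have hqpos : (0 : ℝ) < qR := by linarith
  set s : ℝ := Real.sqrt (2 / qR) with hsdef
  have hs_nonneg : 0 ≤ s := Real.sqrt_nonneg _
  have hs_lt1 : s < 1 := by
    have h2q : (2 / qR) < 1 := by rw [div_lt_one hqpos]; linarith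
    have h3 := Real.sqrt_lt_sqrt (by positivity) h2q
    simpa [hsdef] using h3
  have hs_sq : s ^ 2 = 2 / qR := Real.sq_sqrt (by positivity)
  set σ₁ : ℝ := max σ₀ s with hσ₁def
  have hσ₁pos : 0 < σ₁ := lt_of_lt_of_le hσ₀ (le_max_left _ _)
  have hσ₁1 : σ₁ < 1 := max_lt hσ₀1 hs_lt1
  have hσ₁sq : 2 ≤ qR * σ₁ ^ 2 := by
    have h1 : s ^ 2 ≤ σ₁ ^ 2 := pow_le_pow_left₀ hs_nonneg (le_max_right _ _) 2
    rw [hs_sq] at h1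
    calc (2 : ℝ) = qR * (2 / qR) := by field_simp
      _ ≤ qR * σ₁ ^ 2 := mul_le_mul_of_nonneg_left h1 (le_of_lt hqpos)
  set K : ℝ := ((4 * r + 2 : ℕ) : ℝ) with hKdef
  have hKpos : (0 : ℝ) < K := by
    rw [hKdef]; exact_mod_cast Nat.succ_le_of_lt (by omega)
  refine ⟨2 * K ^ 2 * C₀, by positivity, σ₁, hσ₁pos, hσ₁1, ?_⟩
  intro n
  have hden : qR ^ n ≤ (rho (Set.univ : Set (F r)) n : ℝ) := by
    rw [hqRdef]; exact_mod_cast rho_univ_ge r hr n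
  have hdenpos : (0 : ℝ) < (rho (Set.univ : Set (F r)) n : ℝ) := by
    have hp : (0 : ℝ) < qR ^ n := by positivity
    linarith
  have hZbound : ∀ m : ℕ, (rho Z m : ℝ) ≤ C₀ * σ₀ ^ m * (K * qR ^ m) := by
    intro m
    have hU1 : (1 : ℝ) ≤ (rho (Ur r) m : ℝ) := by exact_mod_cast one_le_rho_Ur r m
    have hUpos : (0 : ℝ) < (rho (Ur r) m : ℝ) := by linarith
    have hb' := hb m
    rw [sub_zero, abs_of_nonneg (by positivity)] at hb'
    rw [div_le_iff₀ hUpos] at hb'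
    have h2 : (rho (Ur r) m : ℝ) ≤ K * qR ^ m := by
      have hm := le_trans (rho_mono (Set.subset_univ (Ur r)) m) (rho_univ_le r hr m)
      rw [hKdef, hqRdef]
      exact_mod_cast hm
    calc (rho Z m : ℝ) ≤ C₀ * σ₀ ^ m * (rho (Ur r) m : ℝ) := hb'
      _ ≤ C₀ * σ₀ ^ m * (K * qR ^ m) :=
          mul_le_mul_of_nonneg_left h2 (by positivity)
  -- numerator bound
  have hsumN := rho_zcirc_le r Z n
  have hsum : (rho (Zcirc Z) n : ℝ) ≤ ∑ k ∈ Finset.range (n + 1),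
      ({w : F r | wlen w = k}.ncard : ℝ) * ({u ∈ Z | wlen u + 2 * k ≤ n}.ncard : ℝ) := by
    exact_mod_cast hsumN
  have hterm : ∀ k ∈ Finset.range (n + 1),
      ({w : F r | wlen w = k}.ncard : ℝ) * ({u ∈ Z | wlen u + 2 * k ≤ n}.ncard : ℝ) ≤
        K ^ 2 * C₀ * (qR * σ₁) ^ n * (1 / 2 : ℝ) ^ k := by
    intro k _
    by_cases h2k : 2 * k ≤ n
    · have ha1 : ({w : F r | wlen w = k}.ncard : ℝ) ≤ K * qR ^ k := by
        have hsub : {w : F r | wlen w = k} ⊆ {w : F r | w ∈ Set.univ ∧ wlen w ≤ k} :=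
          fun w hw => ⟨Set.mem_univ _, le_of_eq hw⟩
        have hfin : {w : F r | w ∈ Set.univ ∧ wlen w ≤ k}.Finite :=
          (ball_finite r k).subset (fun a ha => ha.2)
        have h4 := le_trans (Set.ncard_le_ncard hsub hfin) (rho_univ_le r hr k)
        rw [hKdef, hqRdef]
        exact_mod_cast h4
      have ha2 : {u ∈ Z | wlen u + 2 * k ≤ n} = {u ∈ Z | wlen u ≤ n - 2 * k} := by
        ext u
        simp only [Set.mem_setOf_eq]
        constructor
        · rintro ⟨h1, h2⟩; exact ⟨h1, by omega⟩
        · rintro ⟨h1, h2⟩; exact ⟨h1, by omega⟩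
      have ha3 : ({u ∈ Z | wlen u + 2 * k ≤ n}.ncard : ℝ) ≤
          C₀ * σ₀ ^ (n - 2 * k) * (K * qR ^ (n - 2 * k)) := by
        rw [ha2]
        exact hZbound (n - 2 * k)
      have ha4 : σ₀ ^ (n - 2 * k) ≤ σ₁ ^ (n - 2 * k) :=
        pow_le_pow_left₀ (le_of_lt hσ₀) (le_max_left _ _) _
      have hnn1 : (0 : ℝ) ≤ ({w : F r | wlen w = k}.ncard : ℝ) := by positivity
      have hnn2 : (0 : ℝ) ≤ ({u ∈ Z | wlen u + 2 * k ≤ n}.ncard : ℝ) := by positivity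
      have hstep1 : ({w : F r | wlen w = k}.ncard : ℝ) *
          ({u ∈ Z | wlen u + 2 * k ≤ n}.ncard : ℝ) ≤
          (K * qR ^ k) * (C₀ * σ₁ ^ (n - 2 * k) * (K * qR ^ (n - 2 * k))) := by
        have hb1 : ({u ∈ Z | wlen u + 2 * k ≤ n}.ncard : ℝ) ≤
            C₀ * σ₁ ^ (n - 2 * k) * (K * qR ^ (n - 2 * k)) := by
          refine ha3.trans ?_
          apply mul_le_mul_of_nonneg_right _ (by positivity)
          exact mul_le_mul_of_nonneg_left ha4 (le_of_lt hC₀)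
        apply mul_le_mul ha1 hb1 hnn2 (by positivity)
      refine hstep1.trans ?_
      -- key exponential estimate
      have hkey : (qR * σ₁) ^ (n - 2 * k) * qR ^ k ≤ (qR * σ₁) ^ n * (1 / 2 : ℝ) ^ k := by
        have hnk : (n - 2 * k) + 2 * k = n := Nat.sub_add_cancel h2k
        have e1 : (qR * σ₁) ^ n = (qR * σ₁) ^ (n - 2 * k) * ((qR * σ₁) ^ 2) ^ k := by
          rw [← pow_mul, ← pow_add, hnk]
        have h1 : (2 : ℝ) * qR ≤ (qR * σ₁) ^ 2 := by
          have h2 := mul_le_mul_of_nonneg_left hσ₁sq (le_of_lt hqpos)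
          nlinarith
        have h3 : ((2 : ℝ) * qR) ^ k ≤ ((qR * σ₁) ^ 2) ^ k :=
          pow_le_pow_left₀ (by positivity) h1 k
        calc (qR * σ₁) ^ (n - 2 * k) * qR ^ k
            = (qR * σ₁) ^ (n - 2 * k) * (((2 : ℝ) * qR) ^ k * (1 / 2 : ℝ) ^ k) := by
              rw [← mul_pow]
              have hhalf : (2 : ℝ) * qR * (1 / 2) = qR := by ring
              rw [hhalf]
          _ ≤ (qR * σ₁) ^ (n - 2 * k) * (((qR * σ₁) ^ 2) ^ k * (1 / 2 : ℝ) ^ k) := by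
              apply mul_le_mul_of_nonneg_left _ (by positivity)
              exact mul_le_mul_of_nonneg_right h3 (by positivity)
          _ = (qR * σ₁) ^ n * (1 / 2 : ℝ) ^ k := by rw [e1]; ring
      calc (K * qR ^ k) * (C₀ * σ₁ ^ (n - 2 * k) * (K * qR ^ (n - 2 * k)))
          = K ^ 2 * C₀ * ((qR * σ₁) ^ (n - 2 * k) * qR ^ k) := by
            rw [mul_pow]; ring
        _ ≤ K ^ 2 * C₀ * ((qR * σ₁) ^ n * (1 / 2 : ℝ) ^ k) := by
            apply mul_le_mul_of_nonneg_left hkey (by positivity)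
        _ = K ^ 2 * C₀ * (qR * σ₁) ^ n * (1 / 2 : ℝ) ^ k := by ring
    · have hempty : {u ∈ Z | wlen u + 2 * k ≤ n} = ∅ := by
        ext u
        simp only [Set.mem_setOf_eq, Set.mem_empty_iff_false, iff_false, not_and]
        intro _
        omega
      rw [hempty]
      simp only [Set.ncard_empty, Nat.cast_zero, mul_zero]
      positivity
  have hgeo : ∀ N : ℕ, ∑ k ∈ Finset.range N, (1 / 2 : ℝ) ^ k = 2 - 2 * (1 / 2 : ℝ) ^ N := by
    intro N
    induction N with
    | zero => simp
    | succ N ih => rw [Finset.sum_range_succ, ih, pow_succ]; ring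
  have hnum : (rho (Zcirc Z) n : ℝ) ≤ 2 * K ^ 2 * C₀ * (qR * σ₁) ^ n := by
    refine hsum.trans ((Finset.sum_le_sum hterm).trans ?_)
    rw [← Finset.mul_sum, hgeo (n + 1)]
    have hp : (0 : ℝ) ≤ (1 / 2 : ℝ) ^ (n + 1) := by positivity
    have hc : (0 : ℝ) ≤ K ^ 2 * C₀ * (qR * σ₁) ^ n := by positivity
    nlinarith
  rw [sub_zero, abs_of_nonneg (by positivity)]
  rw [div_le_iff₀ hdenpos]
  have hfinal : 2 * K ^ 2 * C₀ * (qR * σ₁) ^ n ≤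
      2 * K ^ 2 * C₀ * σ₁ ^ n * (rho (Set.univ : Set (F r)) n : ℝ) := by
    rw [mul_pow]
    calc 2 * K ^ 2 * C₀ * (qR ^ n * σ₁ ^ n)
        = 2 * K ^ 2 * C₀ * σ₁ ^ n * qR ^ n := by ring
      _ ≤ 2 * K ^ 2 * C₀ * σ₁ ^ n * (rho (Set.univ : Set (F r)) n : ℝ) := by
          apply mul_le_mul_of_nonneg_left hden (by positivity)
  linarith
end
end

section
/- Let Z ⊆ U_r and let Z° denote the set of all freely reduced words in F_r whose cyclically reduced forms belong to Z. If Z is exponentially generic in U_r then Z° is exponentially generic in F_r. -/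
open scoped Classical

noncomputable section

namespace ZAux

open FreeGroup List

variable {α : Type} [DecidableEq α]

/-- A list is reduced: no adjacent cancelling pair. -/
def Reduced (L : List (α × Bool)) : Prop :=
  L.Chain' fun a b => ¬(a.1 = b.1 ∧ a.2 = !b.2)

theorem reduce_eq_self {L : List (α × Bool)} (h : Reduced L) : reduce L = L := by
  induction L with
  | nil => rfl
  | cons x L ih =>
    have hL : Reduced L := h.tail
    rw [reduce.cons, ih hL]
    cases L with
    | nil => rfl
    | cons hd tl =>
      have : ¬(x.1 = hd.1 ∧ x.2 = !hd.2) := (List.isChain_cons_cons.mp h).1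
      simp [this]

theorem reduced_reduce (L : List (α × Bool)) : Reduced (reduce L) := by
  induction L with
  | nil => exact List.isChain_nil
  | cons x L ih =>
    rw [reduce.cons]
    cases hr : reduce L with
    | nil => exact List.isChain_singleton x
    | cons hd tl =>
      rw [hr] at ih
      show Reduced (if x.1 = hd.1 ∧ x.2 = !hd.2 then tl else x :: hd :: tl)
      split_ifs with h
      · exact ih.tail
      · exact List.isChain_cons_cons.mpr ⟨h, ih⟩

theorem reduced_toWord (w : FreeGroup α) : Reduced w.toWord := by
  rw [← FreeGroup.reduce_toWord]
  exact reduced_reduce _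

theorem toWord_mk_reduced {L : List (α × Bool)} (h : Reduced L) : (mk L).toWord = L := by
  rw [FreeGroup.toWord_mk, reduce_eq_self h]

theorem toWord_mk_of_length {L : List (α × Bool)}
    (h : ((mk L).toWord).length = L.length) : (mk L).toWord = L := by
  rw [FreeGroup.toWord_mk] at h ⊢
  exact (FreeGroup.Red.sublist (FreeGroup.reduce.red)).eq_of_length h

/-- Decomposition of a conjugate with no cancellation. -/
theorem toWord_conj {w u g : FreeGroup α} (hw : w = g * u * g⁻¹)
    (hl : w.toWord.length = u.toWord.length + 2 * g.toWord.length) :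
    w.toWord = g.toWord ++ u.toWord ++ invRev g.toWord := by
  have hw2 : w = mk (g.toWord ++ u.toWord ++ invRev g.toWord) := by
    rw [hw]
    conv_lhs => rw [← FreeGroup.mk_toWord (x := g), ← FreeGroup.mk_toWord (x := u)]
    rw [FreeGroup.inv_mk, FreeGroup.mul_mk, FreeGroup.mul_mk]
  have hlen : ((mk (g.toWord ++ u.toWord ++ invRev g.toWord)).toWord).length
      = (g.toWord ++ u.toWord ++ invRev g.toWord).length := by
    rw [← hw2]
    simp [hl, FreeGroup.invRev_length]
    ring
  rw [hw2]
  exact toWord_mk_of_length hlen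


section Decode

variable {β γ : Type} (dec : γ → β → γ)

/-- Decode a first letter and a list of "increments" into a word. -/
def decodeList : γ → List β → List γ
  | x, [] => [x]
  | x, i :: is => x :: decodeList (dec x i) is

@[simp] theorem decodeList_nil (x : γ) : decodeList dec x [] = [x] := rfl
@[simp] theorem decodeList_cons (x : γ) (i : β) (is : List β) :
    decodeList dec x (i :: is) = x :: decodeList dec (dec x i) is := rfl

theorem decodeList_length (x : γ) (is : List β) :
    (decodeList dec x is).length = is.length + 1 := by
  induction is generalizing x with
  | nil => rfl
  | cons i is ih => simp [ih]

theorem decodeList_head? (x : γ) (is : List β) :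
    (decodeList dec x is).head? = some x := by
  cases is <;> rfl

theorem decodeList_chain' {R : γ → γ → Prop} (hdec : ∀ x i, R x (dec x i))
    (x : γ) (is : List β) : (decodeList dec x is).Chain' R := by
  induction is generalizing x with
  | nil => exact List.isChain_singleton x
  | cons i is ih =>
    rw [decodeList_cons]
    refine List.isChain_cons.mpr ⟨?_, ih _⟩
    intro y hy
    rw [decodeList_head? dec _ is] at hy
    cases hy
    exact hdec x i

theorem decodeList_injOn (hdec : ∀ x, Function.Injective (dec x))
    {x x' : γ} {is is' : List β}
    (h : decodeList dec x is = decodeList dec x' is') : x = x' ∧ is = is' := by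
  induction is generalizing x x' is' with
  | nil =>
    cases is' with
    | nil => simpa using h
    | cons i' is' =>
      exfalso
      have := congrArg List.length h
      simp [decodeList_length] at this
  | cons i is ih =>
    cases is' with
    | nil =>
      exfalso
      have := congrArg List.length h
      simp [decodeList_length] at this
    | cons i' is' =>
      rw [decodeList_cons, decodeList_cons] at h
      have hx : x = x' := by
        have := congrArg List.head? h
        simpa using this
      subst hx
      have ht : decodeList dec (dec x i) is = decodeList dec (dec x i') is' :=
        List.tail_eq_of_cons_eq h
      obtain ⟨h1, h2⟩ := ih ht
      have : i = i' := hdec x h1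
      exact ⟨rfl, by rw [this, h2]⟩

theorem decodeList_surj {R : γ → γ → Prop} (hsurj : ∀ x z, R x z → ∃ i, dec x i = z) :
    ∀ L : List γ, L.Chain' R → L ≠ [] →
      ∃ x is, decodeList dec x is = L ∧ is.length + 1 = L.length := by
  intro L
  induction L with
  | nil => intro _ hne; exact absurd rfl hne
  | cons x T ih =>
    intro hch _
    cases T with
    | nil => exact ⟨x, [], rfl, rfl⟩
    | cons z T' =>
      obtain ⟨x₁, is₁, heq, hlen⟩ := ih (List.isChain_cons_cons.mp hch).2 (by simp)
      have hx₁ : x₁ = z := by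
        have h2 := decodeList_head? dec x₁ is₁
        rw [heq] at h2
        simpa using h2.symm
      subst hx₁
      obtain ⟨i, hi⟩ := hsurj x x₁ (List.isChain_cons_cons.mp hch).1
      refine ⟨x, i :: is₁, ?_, by simpa using hlen⟩
      rw [decodeList_cons, hi, heq]

end Decode

end ZAux

namespace ZAux

theorem exists_cycRedForm {r : ℕ} (w : F r) : ∃ u g : F r, CyclicallyReduced u ∧
    w = g * u * g⁻¹ ∧ wlen w = wlen u + 2 * wlen g := by
  generalize hn : wlen w = n
  induction n using Nat.strong_induction_on generalizing w with
  | _ n ih =>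
  by_cases hc : CyclicallyReduced w
  · refine ⟨w, 1, hc, by simp, ?_⟩
    have : wlen (1 : F r) = 0 := by simp [wlen, FreeGroup.toWord_one]
    omega
  · unfold CyclicallyReduced at hc
    push_neg at hc
    obtain ⟨x, hx, y, hy, hxy⟩ := hc
    obtain ⟨T, hT⟩ := List.head?_eq_some_iff.mp (Option.mem_def.mp hx)
    obtain ⟨K, hK⟩ := List.getLast?_eq_some_iff.mp (Option.mem_def.mp hy)
    cases K with
    | nil =>
      exfalso
      rw [hK] at hT
      have hxy2 : y = x := by
        have := congrArg List.head? hT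
        simpa using this
      have hx2 : x.2 = !y.2 := congrArg Prod.snd hxy
      rw [hxy2] at hx2
      simp at hx2
    | cons k M =>
      have hkx : x :: T = k :: (M ++ [y]) := by rw [← hT, hK]; rfl
      have hkx1 : k = x := (List.head_eq_of_cons_eq hkx).symm
      rw [hkx1] at hK
      have hdec : FreeGroup.toWord w = x :: (M ++ [y]) := by rw [hK]; rfl
      have hred : Reduced (x :: (M ++ [y])) := hdec ▸ reduced_toWord w
      have hMred : Reduced M := List.IsChain.infix hred ⟨[x], [y], by simp⟩
      set w' : F r := FreeGroup.mk M with hw'def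
      have htw' : FreeGroup.toWord w' = M := toWord_mk_reduced hMred
      have hy_eq : FreeGroup.mk [y] = (FreeGroup.mk [x])⁻¹ := by
        rw [FreeGroup.inv_mk]
        congr 1
        simp [FreeGroup.invRev, hxy]
      have hconj0 : w = FreeGroup.mk [x] * w' * (FreeGroup.mk [x])⁻¹ := by
        rw [← hy_eq, hw'def, FreeGroup.mul_mk, FreeGroup.mul_mk,
          ← FreeGroup.mk_toWord (x := w), hdec]
        congr 1
      have hlw : wlen w = M.length + 2 := by simp [wlen, hdec]
      have hlw' : wlen w' = M.length := by simp [wlen, htw']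
      obtain ⟨u, g', hu, hconj', hlen'⟩ := ih M.length (by omega) w' hlw'
      have hlen'' : (FreeGroup.toWord w').length = (FreeGroup.toWord u).length
          + 2 * (FreeGroup.toWord g').length := by
        show wlen w' = wlen u + 2 * wlen g'
        rw [hlw']; exact hlen'
      -- no cancellation when prepending the letter x to g'
      have hhead : ∀ z ∈ (FreeGroup.toWord g').head?, ¬(x.1 = z.1 ∧ x.2 = !z.2) := by
        intro z hz
        obtain ⟨G₂, hG₂⟩ := List.head?_eq_some_iff.mp (Option.mem_def.mp hz)
        have htww : FreeGroup.toWord w' = FreeGroup.toWord g' ++ FreeGroup.toWord u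
            ++ FreeGroup.invRev (FreeGroup.toWord g') := toWord_conj hconj' hlen''
        have hM2 : M = z :: (G₂ ++ FreeGroup.toWord u
            ++ FreeGroup.invRev (FreeGroup.toWord g')) := by
          rw [← htw', htww, hG₂]; simp
        have := hred
        rw [hM2] at this
        exact (List.isChain_cons_cons.mp this).1
      have hredxG : Reduced (x :: FreeGroup.toWord g') :=
        List.isChain_cons.mpr ⟨hhead, reduced_toWord g'⟩
      have hxg : FreeGroup.mk [x] * g' = FreeGroup.mk (x :: FreeGroup.toWord g') := by
        conv_lhs => rw [← FreeGroup.mk_toWord (x := g')]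
        rw [FreeGroup.mul_mk]
        rfl
      have hlxg : wlen (FreeGroup.mk [x] * g') = wlen g' + 1 := by
        rw [hxg]
        unfold wlen
        rw [toWord_mk_reduced hredxG]
        simp
      refine ⟨u, FreeGroup.mk [x] * g', hu, ?_, ?_⟩
      · rw [hconj0, hconj']
        group
      · rw [hlxg]
        omega
end ZAux


namespace ZAux

open FreeGroup

/-! ### Finiteness -/

theorem finite_words_le (r n : ℕ) : {w : F r | wlen w ≤ n}.Finite := by
  have h1 : {w : F r | wlen w ≤ n} ⊆ FreeGroup.toWord ⁻¹' {l | l.length ≤ n} :=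
    fun w hw => hw
  have h2 : (FreeGroup.toWord ⁻¹' {l : List (Fin r × Bool) | l.length ≤ n}).Finite :=
    Set.Finite.preimage (FreeGroup.toWord_injective.injOn) (List.finite_length_le _ n)
  exact h2.subset h1

theorem finite_sub_le {r : ℕ} (S : Set (F r)) (n : ℕ) : {w ∈ S | wlen w ≤ n}.Finite :=
  (finite_words_le r n).subset (fun w hw => hw.2)

theorem finite_sub_eq {r : ℕ} (S : Set (F r)) (n : ℕ) : {w ∈ S | wlen w = n}.Finite :=
  (finite_words_le r n).subset (fun w hw => le_of_eq hw.2)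

theorem rho_mono {r : ℕ} {S T : Set (F r)} (h : S ⊆ T) (n : ℕ) : rho S n ≤ rho T n :=
  Set.ncard_le_ncard (fun w hw => ⟨h hw.1, hw.2⟩) (finite_sub_le T n)

theorem gam_le_rho {r : ℕ} (S : Set (F r)) (n : ℕ) : gam S n ≤ rho S n :=
  Set.ncard_le_ncard (fun w hw => ⟨hw.1, le_of_eq hw.2⟩) (finite_sub_le S n)

/-! ### ncard helpers -/

theorem ncard_prod {X Y : Type} (A : Set X) (B : Set Y) :
    (A ×ˢ B).ncard = A.ncard * B.ncard := by
  rw [← Nat.card_coe_set_eq, ← Nat.card_coe_set_eq, ← Nat.card_coe_set_eq, ← Nat.card_prod]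
  exact Nat.card_congr (Equiv.Set.prod A B)

theorem ncard_lists {β : Type} [Fintype β] (j : ℕ) :
    {l : List β | l.length = j}.ncard = Fintype.card β ^ j := by
  rw [← Nat.card_coe_set_eq]
  have e : ↥{l : List β | l.length = j} ≃ List.Vector β j :=
    Equiv.subtypeEquivRight (fun _ => Iff.rfl)
  rw [Nat.card_congr e, Nat.card_eq_fintype_card, card_vector]

theorem ncard_biUnion_le {X : Type} (A : ℕ → Set X) (m : ℕ) :
    (⋃ k ∈ Finset.range m, A k).ncard ≤ ∑ k ∈ Finset.range m, (A k).ncard := by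
  induction m with
  | zero => simp
  | succ m ih =>
    rw [Finset.sum_range_succ]
    have hU : (⋃ k ∈ Finset.range (m+1), A k) = (⋃ k ∈ Finset.range m, A k) ∪ A m := by
      ext z
      simp only [Set.mem_iUnion, Finset.mem_range, Set.mem_union]
      constructor
      · rintro ⟨k, hk, hz⟩
        rcases Nat.lt_succ_iff_lt_or_eq.mp hk with h | h
        · exact Or.inl ⟨k, h, hz⟩
        · subst h; exact Or.inr hz
      · rintro (⟨k, hk, hz⟩ | hz)
        · exact ⟨k, by omega, hz⟩
        · exact ⟨m, by omega, hz⟩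
    rw [hU]
    exact le_trans (Set.ncard_union_le _ _) (by omega)

/-! ### The letter-encoding equivalence -/

def lettEquiv (r : ℕ) (hr : 0 < r) : (Fin r × Bool) ≃ Fin (2 * r - 1 + 1) :=
  ((Equiv.prodCongr (Equiv.refl (Fin r)) finTwoEquiv.symm).trans finProdFinEquiv).trans
    (finCongr (by omega))

def dec (r : ℕ) (hr : 0 < r) (x : Fin r × Bool) (i : Fin (2 * r - 1)) : Fin r × Bool :=
  (lettEquiv r hr).symm (((lettEquiv r hr) (x.1, !x.2)).succAbove i)

theorem dec_ne {r : ℕ} (hr : 0 < r) (x : Fin r × Bool) (i : Fin (2 * r - 1)) :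
    dec r hr x i ≠ (x.1, !x.2) := by
  intro h
  have := Fin.succAbove_ne ((lettEquiv r hr) (x.1, !x.2)) i
  exact this ((Equiv.symm_apply_eq _).mp h)

theorem dec_inj {r : ℕ} (hr : 0 < r) (x : Fin r × Bool) :
    Function.Injective (dec r hr x) :=
  (lettEquiv r hr).symm.injective.comp (Fin.succAbove_right_injective)

theorem dec_surj {r : ℕ} (hr : 0 < r) (x z : Fin r × Bool) (hz : z ≠ (x.1, !x.2)) :
    ∃ i, dec r hr x i = z := by
  have : (lettEquiv r hr) z ≠ (lettEquiv r hr) (x.1, !x.2) := fun h => hz ((lettEquiv r hr).injective h)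
  obtain ⟨i, hi⟩ := Fin.exists_succAbove_eq this
  exact ⟨i, by rw [dec, hi, Equiv.symm_apply_apply]⟩

theorem dec_rel {r : ℕ} (hr : 0 < r) (x : Fin r × Bool) (i : Fin (2 * r - 1)) :
    ¬(x.1 = (dec r hr x i).1 ∧ x.2 = !(dec r hr x i).2) := by
  rintro ⟨h1, h2⟩
  apply dec_ne hr x i
  have : (dec r hr x i).2 = !x.2 := by rw [h2]; simp
  exact Prod.ext h1.symm this

theorem rel_surj {r : ℕ} (hr : 0 < r) (x z : Fin r × Bool)
    (h : ¬(x.1 = z.1 ∧ x.2 = !z.2)) : ∃ i, dec r hr x i = z := by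
  apply dec_surj hr x z
  intro hz
  apply h
  subst hz
  simp

/-! ### Counting words of given length -/

theorem gam_univ_zero (r : ℕ) : gam (Set.univ : Set (F r)) 0 = 1 := by
  have : {w : F r | w ∈ Set.univ ∧ wlen w = 0} = {1} := by
    ext w
    simp only [Set.mem_setOf_eq, Set.mem_univ, true_and, Set.mem_singleton_iff]
    rw [wlen, List.length_eq_zero_iff, FreeGroup.toWord_eq_nil_iff]
  rw [gam, this, Set.ncard_singleton]

theorem rho_univ_zero (r : ℕ) : rho (Set.univ : Set (F r)) 0 = 1 := by
  have : {w : F r | w ∈ Set.univ ∧ wlen w ≤ 0} = {1} := by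
    ext w
    simp only [Set.mem_setOf_eq, Set.mem_univ, true_and, Set.mem_singleton_iff,
      Nat.le_zero]
    rw [wlen, List.length_eq_zero_iff, FreeGroup.toWord_eq_nil_iff]
  rw [rho, this, Set.ncard_singleton]

theorem gam_univ_succ (r : ℕ) (hr : 0 < r) (j : ℕ) :
    gam (Set.univ : Set (F r)) (j + 1) = 2 * r * (2 * r - 1) ^ j := by
  classical
  set d := dec r hr with hd
  set S : Set (List (Fin r × Bool)) := {L | Reduced L ∧ L.length = j + 1} with hS
  -- step 1 : gam = ncard S
  have himg : FreeGroup.toWord '' {w : F r | w ∈ Set.univ ∧ wlen w = j + 1} = S := by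
    ext L
    constructor
    · rintro ⟨w, ⟨-, hw⟩, rfl⟩
      exact ⟨reduced_toWord w, hw⟩
    · rintro ⟨h1, h2⟩
      exact ⟨FreeGroup.mk L, ⟨Set.mem_univ _, by
        rw [wlen, toWord_mk_reduced h1, h2]⟩, toWord_mk_reduced h1⟩
  have hstep1 : gam (Set.univ : Set (F r)) (j + 1) = S.ncard := by
    rw [gam, ← himg, Set.ncard_image_of_injOn (FreeGroup.toWord_injective.injOn)]
  -- step 2 : S is the image of T
  set T : Set ((Fin r × Bool) × List (Fin (2 * r - 1))) := {p | p.2.length = j} with hT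
  have himg2 : (fun p : (Fin r × Bool) × List (Fin (2 * r - 1)) =>
      decodeList d p.1 p.2) '' T = S := by
    ext L
    constructor
    · rintro ⟨⟨x, is⟩, hp, rfl⟩
      refine ⟨decodeList_chain' d (dec_rel hr) x is, ?_⟩
      rw [decodeList_length]
      have hp' : is.length = j := hp
      show is.length + 1 = j + 1
      omega
    · rintro ⟨h1, h2⟩
      have hne : L ≠ [] := by
        intro h; rw [h] at h2; simp at h2
      obtain ⟨x, is, heq, hlen⟩ := decodeList_surj d (rel_surj hr) L h1 hne
      exact ⟨(x, is), show is.length = j by omega, heq⟩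
  have hinj2 : Set.InjOn (fun p : (Fin r × Bool) × List (Fin (2 * r - 1)) =>
      decodeList d p.1 p.2) T := by
    rintro ⟨x, is⟩ - ⟨x', is'⟩ - h
    obtain ⟨h1, h2⟩ := decodeList_injOn d (dec_inj hr) h
    exact Prod.ext h1 h2
  have hstep2 : S.ncard = T.ncard := by rw [← himg2, Set.ncard_image_of_injOn hinj2]
  -- step 3 : count T
  have hTprod : T = (Set.univ : Set (Fin r × Bool)) ×ˢ {l : List (Fin (2 * r - 1)) | l.length = j} := by
    ext ⟨x, is⟩
    simp [hT]
  have hstep3 : T.ncard = 2 * r * (2 * r - 1) ^ j := by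
    rw [hTprod, ncard_prod, Set.ncard_univ, ncard_lists, Nat.card_eq_fintype_card,
      Fintype.card_prod, Fintype.card_fin, Fintype.card_bool, Fintype.card_fin]
    ring
  rw [hstep1, hstep2, hstep3]

theorem rho_succ_le {r : ℕ} (S : Set (F r)) (n : ℕ) :
    rho S (n + 1) ≤ rho S n + gam S (n + 1) := by
  have hsub : {w ∈ S | wlen w ≤ n + 1} ⊆ {w ∈ S | wlen w ≤ n} ∪ {w ∈ S | wlen w = n + 1} := by
    intro w ⟨h1, h2⟩
    rcases Nat.lt_succ_iff_lt_or_eq.mp (Nat.lt_succ_of_le h2) with h | h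
    · exact Or.inl ⟨h1, by omega⟩
    · exact Or.inr ⟨h1, h⟩
  calc rho S (n + 1) ≤ ({w ∈ S | wlen w ≤ n} ∪ {w ∈ S | wlen w = n + 1}).ncard :=
        Set.ncard_le_ncard hsub ((finite_sub_le S n).union (finite_sub_eq S (n + 1)))
    _ ≤ rho S n + gam S (n + 1) := Set.ncard_union_le _ _

theorem rho_univ_le (r : ℕ) (hr : 2 ≤ r) (n : ℕ) :
    rho (Set.univ : Set (F r)) n ≤ (2 * r - 1) ^ (n + 1) := by
  set t := 2 * r - 1 with ht
  have ht3 : 3 ≤ t := by omega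
  induction n with
  | zero =>
    rw [rho_univ_zero]
    have : (0:ℕ) < t := by omega
    calc (1:ℕ) ≤ t := by omega
      _ = t ^ 1 := (pow_one t).symm
  | succ n ih =>
    calc rho (Set.univ : Set (F r)) (n + 1)
        ≤ rho (Set.univ : Set (F r)) n + gam (Set.univ : Set (F r)) (n + 1) := rho_succ_le _ _
      _ ≤ t ^ (n + 1) + 2 * r * t ^ n := by
          have hg := gam_univ_succ r (by omega) n
          rw [← ht] at hg
          omega
      _ = (2 * t + 1) * t ^ n := by
          have h2r : 2 * r = t + 1 := by omega
          rw [h2r, pow_succ]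
          ring
      _ ≤ (t * t) * t ^ n := by
          have : 2 * t + 1 ≤ t * t := by nlinarith
          exact Nat.mul_le_mul_right _ this
      _ = t ^ (n + 2) := by ring

theorem rho_univ_ge (r : ℕ) (hr : 2 ≤ r) (n : ℕ) :
    (2 * r - 1) ^ n ≤ rho (Set.univ : Set (F r)) n := by
  set t := 2 * r - 1 with ht
  cases n with
  | zero => rw [rho_univ_zero]; simp
  | succ n =>
    calc t ^ (n + 1) = t * t ^ n := by ring
      _ ≤ 2 * r * t ^ n := Nat.mul_le_mul_right _ (by omega)
      _ = gam (Set.univ : Set (F r)) (n + 1) := (gam_univ_succ r (by omega) n).symm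
      _ ≤ rho (Set.univ : Set (F r)) (n + 1) := gam_le_rho _ _

theorem gam_univ_le (r : ℕ) (hr : 2 ≤ r) (k : ℕ) :
    gam (Set.univ : Set (F r)) k ≤ 2 * (2 * r - 1) ^ k := by
  cases k with
  | zero => rw [gam_univ_zero]; simp
  | succ j =>
    rw [gam_univ_succ r (by omega) j]
    calc 2 * r * (2 * r - 1) ^ j ≤ (2 * (2 * r - 1)) * (2 * r - 1) ^ j :=
          Nat.mul_le_mul_right _ (by omega)
      _ = 2 * (2 * r - 1) ^ (j + 1) := by ring

theorem one_mem_Ur (r : ℕ) : (1 : F r) ∈ Ur r := by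
  intro x hx
  rw [FreeGroup.toWord_one] at hx
  simp at hx

theorem rho_Ur_pos (r : ℕ) (m : ℕ) : 0 < rho (Ur r) m :=
  (Set.ncard_pos (finite_sub_le _ _)).mpr ⟨1, one_mem_Ur r, by
    show wlen (1 : F r) ≤ m
    rw [wlen, FreeGroup.toWord_one]
    simp⟩

/-! ### The numerator bound -/

theorem rho_comp_le (r : ℕ) (Z : Set (F r)) (n : ℕ) :
    rho (Set.univ \ Zcirc Z) n ≤
      ∑ k ∈ Finset.range (n + 1),
        (if 2 * k ≤ n then rho (Ur r \ Z) (n - 2 * k) * gam (Set.univ : Set (F r)) k else 0) := by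
  classical
  have key : ∀ w : F r, ∃ p : F r × F r, CyclicallyReduced p.1 ∧ w = p.2 * p.1 * p.2⁻¹ ∧
      wlen w = wlen p.1 + 2 * wlen p.2 := by
    intro w
    obtain ⟨u, g, h1, h2, h3⟩ := exists_cycRedForm w
    exact ⟨(u, g), h1, h2, h3⟩
  choose f hf1 hf2 hf3 using key
  set A : ℕ → Set (F r × F r) := fun k =>
    {u | u ∈ Ur r \ Z ∧ wlen u + 2 * k ≤ n} ×ˢ {g | wlen g = k} with hA
  have hfinA : ∀ k, (A k).Finite := by
    intro k
    apply Set.Finite.prod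
    · exact (finite_words_le r n).subset (fun u hu => by
        have := hu.2; simp only [Set.mem_setOf_eq]; omega)
    · exact (finite_words_le r k).subset (fun g hg => le_of_eq hg)
  have hmap : ∀ w ∈ {w ∈ (Set.univ \ Zcirc Z) | wlen w ≤ n},
      f w ∈ ⋃ k ∈ Finset.range (n + 1), A k := by
    rintro w ⟨⟨-, hwz⟩, hwn⟩
    have h3 := hf3 w
    have hk : wlen (f w).2 < n + 1 := by omega
    simp only [Set.mem_iUnion]
    refine ⟨wlen (f w).2, Finset.mem_range.mpr hk, ?_, rfl⟩
    refine ⟨⟨hf1 w, ?_⟩, by omega⟩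
    intro huZ
    exact hwz ⟨(f w).1, huZ, hf1 w, (f w).2, hf2 w, h3⟩
  have hinj : Set.InjOn f {w ∈ (Set.univ \ Zcirc Z) | wlen w ≤ n} := by
    intro a _ b _ hab
    have ha := hf2 a
    rw [hab] at ha
    rw [ha, ← hf2 b]
  have hfinU : (⋃ k ∈ Finset.range (n + 1), A k).Finite := by
    apply Set.Finite.subset (Set.Finite.prod (finite_words_le r n) (finite_words_le r n))
    intro p hp
    simp only [Set.mem_iUnion] at hp
    obtain ⟨k, hk, hpk⟩ := hp
    obtain ⟨hp1, hp2⟩ := hpk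
    have hk' : k < n + 1 := Finset.mem_range.mp hk
    obtain ⟨-, hlen⟩ := hp1
    refine ⟨?_, ?_⟩
    · show wlen p.1 ≤ n
      omega
    · show wlen p.2 ≤ n
      have : wlen p.2 = k := hp2
      omega
  calc rho (Set.univ \ Zcirc Z) n
      ≤ (⋃ k ∈ Finset.range (n + 1), A k).ncard :=
        Set.ncard_le_ncard_of_injOn f hmap hinj hfinU
    _ ≤ ∑ k ∈ Finset.range (n + 1), (A k).ncard := ncard_biUnion_le A (n + 1)
    _ ≤ ∑ k ∈ Finset.range (n + 1),
        (if 2 * k ≤ n then rho (Ur r \ Z) (n - 2 * k) * gam (Set.univ : Set (F r)) k else 0) := by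
        apply Finset.sum_le_sum
        intro k _
        rw [hA]
        dsimp only
        rw [ncard_prod]
        by_cases hk2 : 2 * k ≤ n
        · rw [if_pos hk2]
          apply Nat.mul_le_mul
          · apply Set.ncard_le_ncard _ (finite_sub_le _ _)
            rintro u ⟨hu1, hu2⟩
            exact ⟨hu1, by omega⟩
          · apply le_of_eq
            congr 1
            ext g
            simp [gam]
        · rw [if_neg hk2]
          have hempty : {u : F r | u ∈ Ur r \ Z ∧ wlen u + 2 * k ≤ n} = ∅ := by
            ext u
            simp only [Set.mem_setOf_eq, Set.mem_empty_iff_false, iff_false]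
            rintro ⟨-, hle⟩
            omega
          rw [hempty]
          simp
  
end ZAux

/-- If `Z ⊆ U_r` is exponentially generic in `U_r`, then `Z°` is
exponentially generic in `F_r`. -/
theorem zcirc_expGeneric (r : ℕ) (hr : 2 ≤ r) (Z : Set (F r)) (hZ : Z ⊆ Ur r)
    (h : ExpGenericIn Z (Ur r)) :
    ExpGenericIn (Zcirc Z) Set.univ := by
  classical
  obtain ⟨C, hC, σ, hσ0, hσ1, hb⟩ := h
  set t : ℕ := 2 * r - 1 with htdef
  have ht3 : 3 ≤ t := by omega
  set tR : ℝ := (t : ℝ) with htR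
  have htR3 : (3 : ℝ) ≤ tR := by rw [htR]; exact_mod_cast ht3
  have htR0 : (0 : ℝ) < tR := by linarith
  -- the parameter τ
  have hsqrtpos : (0 : ℝ) < Real.sqrt tR := Real.sqrt_pos.mpr htR0
  have hsqrt1 : 1 < Real.sqrt tR := by
    have h1 : (1 : ℝ) = Real.sqrt 1 := Real.sqrt_one.symm
    rw [h1]
    exact Real.sqrt_lt_sqrt (by norm_num) (by linarith)
  set τ : ℝ := max σ (Real.sqrt tR)⁻¹ with hτdef
  have hτ0 : 0 < τ := lt_of_lt_of_le hσ0 (le_max_left _ _)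
  have hτ1 : τ < 1 := max_lt hσ1 (by rw [inv_lt_one_iff₀]; right; exact hsqrt1)
  have hστ : σ ≤ τ := le_max_left _ _
  have hτt : tR⁻¹ ≤ τ ^ 2 := by
    have hs : ((Real.sqrt tR)⁻¹) ^ 2 = tR⁻¹ := by
      rw [inv_pow, Real.sq_sqrt htR0.le]
    rw [← hs]
    exact pow_le_pow_left₀ (inv_nonneg.mpr hsqrtpos.le) (le_max_right _ _) 2
  have hτ2t : (1 : ℝ) ≤ τ ^ 2 * tR := by
    have := mul_le_mul_of_nonneg_right hτt htR0.le
    rwa [inv_mul_cancel₀ htR0.ne'] at this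
  -- basic counting bounds, in ℝ
  have hden_ge : ∀ n : ℕ, tR ^ n ≤ (rho (Set.univ : Set (F r)) n : ℝ) := by
    intro n
    have := ZAux.rho_univ_ge r hr n
    calc tR ^ n = ((t ^ n : ℕ) : ℝ) := by push_cast; rfl
      _ ≤ _ := by exact_mod_cast this
  have hden_le : ∀ n : ℕ, ((rho (Ur r) n : ℕ) : ℝ) ≤ tR ^ (n + 1) := by
    intro n
    have h1 : rho (Ur r) n ≤ rho (Set.univ : Set (F r)) n :=
      ZAux.rho_mono (Set.subset_univ _) n
    have h2 : rho (Set.univ : Set (F r)) n ≤ t ^ (n + 1) := ZAux.rho_univ_le r hr n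
    calc ((rho (Ur r) n : ℕ) : ℝ) ≤ ((t ^ (n+1) : ℕ) : ℝ) := by exact_mod_cast le_trans h1 h2
      _ = tR ^ (n + 1) := by push_cast; rfl
  have hgam_le : ∀ k : ℕ, ((gam (Set.univ : Set (F r)) k : ℕ) : ℝ) ≤ 2 * tR ^ k := by
    intro k
    have := ZAux.gam_univ_le r hr k
    calc ((gam (Set.univ : Set (F r)) k : ℕ) : ℝ) ≤ ((2 * t ^ k : ℕ) : ℝ) := by exact_mod_cast this
      _ = 2 * tR ^ k := by push_cast; rfl
  have hnum : ∀ m : ℕ, ((rho (Ur r \ Z) m : ℕ) : ℝ) ≤ C * σ ^ m * tR ^ (m + 1) := by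
    intro m
    have hpos : (0 : ℝ) < ((rho (Ur r) m : ℕ) : ℝ) := by exact_mod_cast ZAux.rho_Ur_pos r m
    have hb' := hb m
    rw [sub_zero] at hb'
    have hratio : ((rho (Ur r \ Z) m : ℕ) : ℝ) / ((rho (Ur r) m : ℕ) : ℝ) ≤ C * σ ^ m :=
      le_trans (le_abs_self _) hb'
    have h1 : ((rho (Ur r \ Z) m : ℕ) : ℝ) ≤ C * σ ^ m * ((rho (Ur r) m : ℕ) : ℝ) :=
      (div_le_iff₀ hpos).mp hratio
    calc ((rho (Ur r \ Z) m : ℕ) : ℝ) ≤ C * σ ^ m * ((rho (Ur r) m : ℕ) : ℝ) := h1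
      _ ≤ C * σ ^ m * tR ^ (m + 1) := by
          apply mul_le_mul_of_nonneg_left (hden_le m)
          positivity
  -- the per-term bound
  set E : ℕ → ℝ := fun n => 2 * C * tR * (τ ^ n * tR ^ n) with hE
  have hE0 : ∀ n, 0 ≤ E n := by
    intro n
    have : (0:ℝ) < τ := hτ0
    positivity
  have hterm : ∀ n k : ℕ, 2 * k ≤ n →
      (C * σ ^ (n - 2 * k) * tR ^ (n - 2 * k + 1)) * (2 * tR ^ k) ≤ E n := by
    intro n k hk
    set m : ℕ := n - 2 * k with hm
    have hmk : m + 2 * k = n := by omega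
    have heq : (C * σ ^ m * tR ^ (m + 1)) * (2 * tR ^ k)
        = 2 * C * tR * (σ ^ m * (tR ^ m * tR ^ k)) := by
      rw [pow_succ]
      ring
    rw [heq, hE]
    apply mul_le_mul_of_nonneg_left _ (by positivity : (0:ℝ) ≤ 2 * C * tR)
    have hstep1 : σ ^ m * (tR ^ m * tR ^ k) ≤ τ ^ m * (tR ^ m * tR ^ k) := by
      apply mul_le_mul_of_nonneg_right (pow_le_pow_left₀ hσ0.le hστ m)
      positivity
    have hstep2 : τ ^ m * (tR ^ m * tR ^ k) ≤ τ ^ n * tR ^ n := by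
      have hsplit : τ ^ n * tR ^ n = (τ ^ m * (tR ^ m * tR ^ k)) * ((τ ^ 2 * tR) ^ k) := by
        rw [← hmk]
        ring
      rw [hsplit]
      nth_rewrite 1 [← mul_one (τ ^ m * (tR ^ m * tR ^ k))]
      apply mul_le_mul_of_nonneg_left _ (by positivity)
      exact le_trans (by norm_num) (pow_le_pow_left₀ (by norm_num) hτ2t k)
    exact le_trans hstep1 hstep2
  -- ratio bound : rho(comp)/rho(univ) ≤ 2 C tR (n+1) τ^n
  have hratio : ∀ n : ℕ,
      ((rho (Set.univ \ Zcirc Z) n : ℕ) : ℝ) / ((rho (Set.univ : Set (F r)) n : ℕ) : ℝ)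
        ≤ 2 * C * tR * (n + 1) * τ ^ n := by
    intro n
    have hdpos : (0 : ℝ) < ((rho (Set.univ : Set (F r)) n : ℕ) : ℝ) :=
      lt_of_lt_of_le (by positivity) (hden_ge n)
    rw [div_le_iff₀ hdpos]
    have hsum := ZAux.rho_comp_le r Z n
    have hsumR : ((rho (Set.univ \ Zcirc Z) n : ℕ) : ℝ) ≤
        ∑ k ∈ Finset.range (n + 1),
          (if 2 * k ≤ n then ((rho (Ur r \ Z) (n - 2 * k) : ℕ) : ℝ)
            * ((gam (Set.univ : Set (F r)) k : ℕ) : ℝ) else 0) := by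
      have := (Nat.cast_le (α := ℝ)).mpr hsum
      rw [Nat.cast_sum] at this
      convert this using 2 with k
      · rfl
      rw [apply_ite (Nat.cast : ℕ → ℝ)]
      push_cast
      rfl
    have hsum2 : ∑ k ∈ Finset.range (n + 1),
          (if 2 * k ≤ n then ((rho (Ur r \ Z) (n - 2 * k) : ℕ) : ℝ)
            * ((gam (Set.univ : Set (F r)) k : ℕ) : ℝ) else 0)
        ≤ (n + 1) * E n := by
      calc _ ≤ ∑ _k ∈ Finset.range (n + 1), E n := by
            apply Finset.sum_le_sum
            intro k _
            by_cases hk2 : 2 * k ≤ n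
            · rw [if_pos hk2]
              calc ((rho (Ur r \ Z) (n - 2 * k) : ℕ) : ℝ)
                    * ((gam (Set.univ : Set (F r)) k : ℕ) : ℝ)
                  ≤ (C * σ ^ (n - 2 * k) * tR ^ (n - 2 * k + 1)) * (2 * tR ^ k) := by
                    apply mul_le_mul (hnum _) (hgam_le k) (by positivity) (by positivity)
                _ ≤ E n := hterm n k hk2
            · rw [if_neg hk2]
              exact hE0 n
        _ = (n + 1) * E n := by
            rw [Finset.sum_const, Finset.card_range]
            simp [nsmul_eq_mul]
    calc ((rho (Set.univ \ Zcirc Z) n : ℕ) : ℝ) ≤ (n + 1) * E n :=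
          le_trans hsumR hsum2
      _ = (2 * C * tR * (n + 1) * τ ^ n) * tR ^ n := by rw [hE]; ring
      _ ≤ (2 * C * tR * (n + 1) * τ ^ n) * ((rho (Set.univ : Set (F r)) n : ℕ) : ℝ) := by
          apply mul_le_mul_of_nonneg_left (hden_ge n)
          positivity
  -- final exponential bound
  set ε : ℝ := (1 - τ) / (2 * τ) with hεdef
  have hε0 : 0 < ε := div_pos (by linarith) (by linarith)
  have hετ : (1 + ε) * τ = (1 + τ) / 2 := by
    rw [hεdef]
    field_simp
    ring
  set B : ℝ := 1 + ε⁻¹ with hB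
  have hB1 : (1 : ℝ) ≤ B := by
    have : 0 < ε⁻¹ := inv_pos.mpr hε0
    rw [hB]; linarith
  have hpoly : ∀ n : ℕ, ((n : ℝ) + 1) ≤ B * (1 + ε) ^ n := by
    intro n
    have h1 : 1 + (n : ℝ) * ε ≤ (1 + ε) ^ n := one_add_mul_le_pow (by linarith) n
    have h2 : ((n : ℝ) + 1) ≤ B * (1 + (n : ℝ) * ε) := by
      rw [hB]
      have hinv : ε⁻¹ * ε = 1 := inv_mul_cancel₀ hε0.ne'
      have hn0 : (0 : ℝ) ≤ (n : ℝ) := Nat.cast_nonneg n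
      nlinarith [inv_pos.mpr hε0, mul_nonneg hn0 hε0.le]
    calc ((n : ℝ) + 1) ≤ B * (1 + (n : ℝ) * ε) := h2
      _ ≤ B * (1 + ε) ^ n := mul_le_mul_of_nonneg_left h1 (by linarith)
  refine ⟨2 * C * tR * B, by positivity, (1 + τ) / 2, by linarith, by linarith, ?_⟩
  intro n
  rw [sub_zero]
  have hnn : (0 : ℝ) ≤ ((rho (Set.univ \ Zcirc Z) n : ℕ) : ℝ)
      / ((rho (Set.univ : Set (F r)) n : ℕ) : ℝ) := by positivity
  rw [abs_of_nonneg hnn]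
  calc ((rho (Set.univ \ Zcirc Z) n : ℕ) : ℝ) / ((rho (Set.univ : Set (F r)) n : ℕ) : ℝ)
      ≤ 2 * C * tR * (n + 1) * τ ^ n := hratio n
    _ ≤ 2 * C * tR * (B * (1 + ε) ^ n) * τ ^ n := by
        apply mul_le_mul_of_nonneg_right _ (by positivity)
        apply mul_le_mul_of_nonneg_left (hpoly n) (by positivity)
    _ = 2 * C * tR * B * ((1 + ε) * τ) ^ n := by
        rw [mul_pow]
        ring
    _ = 2 * C * tR * B * ((1 + τ) / 2) ^ n := by rw [hετ]
end
end

section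
/- For a nontrivial element g ∈ F_r, one has π(g) = ∞ if and only if g is primitive in F_r. -/
open scoped Classical

noncomputable section

section AuxNS
open scoped Classical
open CategoryTheory CategoryTheory.SingleObj CategoryTheory.ActionCategory Quiver IsFreeGroupoid IsFreeGroupoid.SpanningTree FreeGroup

universe u
variable {G : Type u} [Groupoid.{u} G] [IsFreeGroupoid G]
  (T : WideSubquiver (Symmetrify <| Generators G)) [Arborescence T]

def nsRoot : G := show T from root T

example : treeHom T (nsRoot T) = 𝟙 _ := Eq.trans (treeHom_eq T Path.nil) rfl

example {a b : G} (p : a ⟶ b) : End (nsRoot T) := loopOfHom T p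

lemma FreeGroupBasis.ofUniqueLift_apply {H : Type u} [Group H] (X : Type u) (of : X → H)
    (h : ∀ {K : Type u} [Group K] (f : X → K), ∃! F : H →* K, ∀ a, F (of a) = f a) (x : X) :
    FreeGroupBasis.ofUniqueLift X of h x = of x := by
  change (FreeGroupBasis.ofUniqueLift X of h).repr.symm (FreeGroup.of x) = of x
  simp only [FreeGroupBasis.ofUniqueLift, FreeGroupBasis.ofLift, MulEquiv.symm_symm]
  change FreeGroup.lift of (FreeGroup.of x) = of x
  simp

lemma nsTreeHom_root : treeHom T (nsRoot T) = 𝟙 (nsRoot T) :=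
  Eq.trans (treeHom_eq T Path.nil) rfl

lemma nsLoopOfHom_root (x : End (nsRoot T)) : loopOfHom T x = x := by
  simp only [loopOfHom, nsTreeHom_root]
  show 𝟙 (nsRoot T) ≫ x ≫ inv (𝟙 (nsRoot T)) = x
  simp

lemma endLift_spec : ∀ {X : Type u} [Group X]
    (f : ((wideSubquiverEquivSetTotal <| wideSubquiverSymmetrify T)ᶜ : Set _) → X),
    ∃! F : End (nsRoot T) →* X, ∀ a, F (loopOfHom T (of a.val.hom)) = f a :=
  (by
      intro X _ f
      let f' : Labelling (Generators G) X := fun a b e =>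
        if h : e ∈ wideSubquiverSymmetrify T a b then 1 else f ⟨⟨a, b, e⟩, h⟩
      rcases unique_lift f' with ⟨F', hF', uF'⟩
      refine ⟨F'.mapEnd _, ?_, ?_⟩
      · suffices ∀ {x y} (q : x ⟶ y), F'.map (loopOfHom T q) = (F'.map q : X) by
          rintro ⟨⟨a, b, e⟩, h⟩
          erw [Functor.mapEnd_apply, this, hF']
          exact dif_neg h
        intros x y q
        suffices ∀ {a} (p : Path (root T) a), F'.map (homOfPath T p) = 1 by
          simp only [this, treeHom, comp_as_mul, inv_as_inv, loopOfHom, inv_one, mul_one,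
            one_mul, Functor.map_inv, Functor.map_comp]
          erw [this, this, inv_one, one_mul, mul_one]
        intro a p
        induction' p with b c p e ih
        · exact F'.map_id _
        erw [homOfPath, F'.map_comp, comp_as_mul, ih, mul_one]
        rcases e with ⟨e | e, eT⟩
        · erw [hF']
          exact dif_pos (Or.inl eT)
        · erw [F'.map_inv, inv_as_inv, inv_eq_one, hF']
          exact dif_pos (Or.inr eT)
      · intro E hE
        ext x
        suffices h2 : (functorOfMonoidHom T E).map x = F'.map x by
          exact (congrArg E (nsLoopOfHom_root T x).symm).trans h2
        congr
        apply uF'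
        intro a b e
        change E (loopOfHom T _) = dite _ _ _
        split_ifs with h
        · rw [loopOfHom_eq_id T e h]; exact E.map_one
        · exact hE ⟨⟨a, b, e⟩, h⟩)

set_option maxHeartbeats 400000 in
def endBasis : FreeGroupBasis ((wideSubquiverEquivSetTotal <| wideSubquiverSymmetrify T)ᶜ : Set _)
    (End (nsRoot T)) :=
  FreeGroupBasis.ofUniqueLift _ (fun e => loopOfHom T (of e.val.hom)) (endLift_spec T)

lemma endBasis_apply (e) : endBasis T e = loopOfHom T (of e.val.hom) := by
  show (endBasis T).repr.symm (FreeGroup.of e) = _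
  rw [endBasis]
  exact FreeGroupBasis.ofUniqueLift_apply _ _ (endLift_spec T) e

def gRoot : Generators G := (nsRoot T : G)

lemma not_mem_tree_of_loop_at_root (e : @Quiver.Hom (Generators G) _ (gRoot T) (gRoot T)) :
    e ∉ wideSubquiverSymmetrify T (gRoot T) (gRoot T) := by
  have con : ∀ f : @Quiver.Hom (WideSubquiver.toType _ T) _ (root T) (root T), False := by
    intro f
    have h1 : (Path.nil : Path (root T) (root T)) = Path.nil.cons f := by
      apply Subsingleton.elim
    simpa using congrArg Path.length h1
  rintro (h | h)
  · exact con ⟨Sum.inl e, h⟩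
  · exact con ⟨Sum.inr e, h⟩

section LemA
variable {G₀ : Type} [Group G₀] [IsFreeGroup G₀] (H : Subgroup G₀)

lemma aux_primitive_of_generator (e : IsFreeGroup.Generators G₀) (he : IsFreeGroup.of e ∈ H) :
    ∃ (ι : Type) (b : FreeGroupBasis ι H) (i : ι), (b i : G₀) = IsFreeGroup.of e := by
  let C := ActionCategory G₀ (G₀ ⧸ H)
  let X : C := objEquiv G₀ (G₀ ⧸ H) ↑(1 : G₀)
  haveI : RootedConnected (show Symmetrify (Generators C) from X) :=
    ⟨fun b => path_nonempty_of_hom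
      (@CategoryTheory.nonempty_hom_of_preconnected_groupoid (ActionCategory G₀ (G₀ ⧸ H)) _
        (@IsConnected.toIsPreconnected _ _
          ActionCategory.instIsConnectedOfIsPretransitiveOfNonempty) X b)⟩
  let T : WideSubquiver (Symmetrify (Generators C)) :=
    geodesicSubtree (show Symmetrify (Generators C) from X)
  have pf : IsFreeGroup.of e • (X.back) = X.back := by
    show IsFreeGroup.of e • ((1 : G₀) : G₀ ⧸ H) = ((1 : G₀) : G₀ ⧸ H)
    rw [MulAction.Quotient.smul_mk, smul_eq_mul, mul_one, QuotientGroup.eq]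
    simpa using inv_mem he
  let e0 : @Quiver.Hom (Generators C) _ (gRoot T) (gRoot T) := ⟨e, pf⟩
  have hni : (⟨gRoot T, gRoot T, e0⟩ : Total (Generators C)) ∈
      ((wideSubquiverEquivSetTotal <| wideSubquiverSymmetrify T)ᶜ : Set _) :=
    not_mem_tree_of_loop_at_root T e0
  let ψ : End (nsRoot T) ≃* H := endMulEquivSubgroup H
  refine ⟨_, (endBasis T).map ψ, ⟨_, hni⟩, ?_⟩
  erw [FreeGroupBasis.map_apply, endBasis_apply]
  show (ψ (loopOfHom T (of e0)) : G₀) = IsFreeGroup.of e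
  erw [nsLoopOfHom_root T (of e0 : End (nsRoot T))]
  rfl

end LemA


lemma isPrimitive_map {G K : Type} [Group G] [Group K] (φ : G ≃* K) {g : G}
    (h : IsPrimitive g) : IsPrimitive (φ g) := by
  obtain ⟨ι, b, i, hb⟩ := h
  exact ⟨ι, b.map φ, i, by rw [FreeGroupBasis.map_apply, hb]⟩

lemma primitive_in_subgroup {G : Type} [Group G] {ι : Type} (b : FreeGroupBasis ι G) (i : ι)
    (H : Subgroup G) (hm : b i ∈ H) : IsPrimitive (⟨b i, hm⟩ : H) := by
  haveI : IsFreeGroup G := b.isFreeGroup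
  let eq : ι ≃ IsFreeGroup.Generators G :=
    Equiv.ofFreeGroupEquiv (b.repr.symm.trans (IsFreeGroup.toFreeGroup G))
  let φ : G ≃* G :=
    (IsFreeGroup.toFreeGroup G).trans ((FreeGroup.freeGroupCongr eq.symm).trans b.repr.symm)
  have key : φ (IsFreeGroup.of (eq i)) = b i := by
    show b.repr.symm (FreeGroup.freeGroupCongr eq.symm
      ((IsFreeGroup.mulEquiv G).symm (IsFreeGroup.of (eq i)))) = b i
    rw [show IsFreeGroup.of (eq i) = (IsFreeGroup.mulEquiv G) (FreeGroup.of (eq i)) from rfl]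
    rw [MulEquiv.symm_apply_apply]
    simp
    rfl
  let H' : Subgroup G := H.comap (φ : G →* G)
  have he' : IsFreeGroup.of (eq i) ∈ H' := by
    show φ (IsFreeGroup.of (eq i)) ∈ H
    rw [key]; exact hm
  obtain ⟨κ, c, j, hc⟩ := aux_primitive_of_generator H' (eq i) he'
  let ψ : H' ≃* H :=
    (φ.subgroupMap H').trans (MulEquiv.subgroupCongr
      (by rw [Subgroup.map_comap_eq_self_of_surjective φ.surjective]))
  have : ψ (c j) = ⟨b i, hm⟩ := by
    apply Subtype.ext
    show φ ((c j : G)) = b i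
    rw [hc, key]
  exact ⟨κ, c.map ψ, j, by rw [FreeGroupBasis.map_apply, this]⟩


end AuxNS

/-- For a nontrivial `g ∈ F_r`, `π(g) = ∞` iff `g` is primitive in `F_r`. -/
theorem primitivityRank_eq_top_iff (r : ℕ) (hr : 2 ≤ r) (g : F r) (hg : g ≠ 1) :
    primitivityRank g = ⊤ ↔ IsPrimitive g := by
  constructor
  · intro h
    by_contra hnp
    have hmem : (r : ℕ∞) ∈ {n : ℕ∞ | ∃ (H : Subgroup (F r)) (hg' : g ∈ H),
        ¬ IsPrimitive (⟨g, hg'⟩ : H) ∧ HasRank H n} := by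
      refine ⟨⊤, Subgroup.mem_top g, ?_, ?_⟩
      · intro hp
        apply hnp
        have := isPrimitive_map (Subgroup.topEquiv) hp
        simpa using this
      · refine ⟨Fin r, (FreeGroupBasis.ofFreeGroup (Fin r)).map Subgroup.topEquiv.symm, ?_⟩
        simp
    have hle : primitivityRank g ≤ (r : ℕ∞) := sInf_le hmem
    rw [h] at hle
    exact (ENat.coe_ne_top r) (top_le_iff.mp hle)
  · intro hp
    rw [primitivityRank, sInf_eq_top]
    rintro n ⟨H, hgH, hnprim, -⟩
    exfalso
    obtain ⟨ι, b, i, hb⟩ := hp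
    have hm : b i ∈ H := hb ▸ hgH
    have hprim := primitive_in_subgroup b i H hm
    have heq : (⟨b i, hm⟩ : H) = ⟨g, hgH⟩ := Subtype.ext hb
    rw [heq] at hprim
    exact hnprim hprim
end
end

section
/- For every freely reduced word z of length 2 over A, the set of all cyclically reduced words in U_r that contain z as a subword is exponentially generic in U_r. -/
open scoped Classical

noncomputable section

namespace GTL

variable {r : ℕ}

/-- The inverse letter. -/
def bar {r : ℕ} (a : Fin r × Bool) : Fin r × Bool := (a.1, !a.2)

lemma bar_bar (a : Fin r × Bool) : bar (bar a) = a := by simp [bar]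

lemma bar_ne_self (a : Fin r × Bool) : bar a ≠ a := by
  simp [bar, Prod.ext_iff]

lemma eq_bar_comm {a b : Fin r × Bool} : a = bar b ↔ b = bar a := by
  constructor <;> (rintro rfl; simp [bar_bar])

/-- Reducedness of a word. -/
def RedP {r : ℕ} (L : List (Fin r × Bool)) : Prop :=
  List.Chain' (fun a b => b ≠ bar a) L

/-- Cyclic reducedness of a word. -/
def CycP {r : ℕ} (L : List (Fin r × Bool)) : Prop :=
  ∀ x ∈ L.head?, ∀ y ∈ L.getLast?, x ≠ (y.1, !y.2)

lemma reduce_eq_self {L : List (Fin r × Bool)} (h : RedP L) : FreeGroup.reduce L = L := by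
  induction L with
  | nil => rfl
  | cons a L ih =>
    have hL : RedP L := h.tail
    rw [FreeGroup.reduce.cons, ih hL]
    cases L with
    | nil => rfl
    | cons b t =>
      have hab : b ≠ bar a := (List.isChain_cons_cons.1 h).1
      have : ¬ (a.1 = b.1 ∧ a.2 = !b.2) := by
        rintro ⟨h1, h2⟩
        exact hab (by simp [bar, Prod.ext_iff, h1, h2])
      simp only [this, if_false]

lemma redP_reduce (L : List (Fin r × Bool)) : RedP (FreeGroup.reduce L) := by
  induction L with
  | nil => exact List.isChain_nil
  | cons a L ih =>
    rw [FreeGroup.reduce.cons]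
    rcases h : FreeGroup.reduce L with _ | ⟨b, t⟩
    · simp [RedP, List.Chain']
    · rw [h] at ih
      by_cases hc : a.1 = b.1 ∧ a.2 = !b.2
      · simp only [hc, if_true]
        exact ih.tail
      · simp only [hc, if_false]
        refine List.isChain_cons_cons.2 ⟨?_, ih⟩
        rintro rfl
        exact hc ⟨rfl, by simp [bar]⟩

lemma redP_toWord (w : FreeGroup (Fin r)) : RedP (FreeGroup.toWord w) := by
  have := redP_reduce (FreeGroup.toWord w)
  rwa [FreeGroup.reduce_toWord] at this

lemma toWord_mk_of_redP {L : List (Fin r × Bool)} (h : RedP L) :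
    FreeGroup.toWord (FreeGroup.mk L) = L := by
  rw [FreeGroup.toWord_mk, reduce_eq_self h]

/-- All words of length `n`. -/
def allW (r : ℕ) : ℕ → Finset (List (Fin r × Bool))
  | 0 => {[]}
  | n + 1 => ((Finset.univ : Finset (Fin r × Bool)) ×ˢ allW r n).image fun p => p.1 :: p.2

lemma mem_allW : ∀ {n : ℕ} {L : List (Fin r × Bool)}, L ∈ allW r n ↔ L.length = n
  | 0, L => by
    constructor
    · intro h; simp [allW] at h; simp [h]
    · intro h; rw [List.length_eq_zero_iff] at h; simp [allW, h]
  | n + 1, L => by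
    constructor
    · intro h
      simp only [allW, Finset.mem_image, Finset.mem_product] at h
      obtain ⟨⟨a, M⟩, ⟨-, hM⟩, rfl⟩ := h
      simp [mem_allW.1 hM]
    · intro h
      cases L with
      | nil => simp at h
      | cons a M =>
        simp only [List.length_cons, Nat.add_right_cancel_iff] at h
        simp only [allW, Finset.mem_image, Finset.mem_product]
        exact ⟨(a, M), ⟨Finset.mem_univ _, mem_allW.2 h⟩, rfl⟩

lemma card_univ_letters (r : ℕ) : (Finset.univ : Finset (Fin r × Bool)).card = 2 * r := by
  simp [Finset.card_univ, mul_comm]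

lemma card_allW_le (n : ℕ) : (allW r n).card ≤ (2 * r) ^ n := by
  induction n with
  | zero => simp [allW]
  | succ n ih =>
    calc (allW r (n+1)).card ≤ ((Finset.univ : Finset (Fin r × Bool)) ×ˢ allW r n).card :=
          Finset.card_image_le
    _ = 2 * r * (allW r n).card := by rw [Finset.card_product, card_univ_letters]
    _ ≤ 2 * r * (2 * r) ^ n := Nat.mul_le_mul_left _ ih
    _ = (2 * r) ^ (n + 1) := by ring

/-- Reduced words of length `n`. -/
def RW (r n : ℕ) : Finset (List (Fin r × Bool)) := (allW r n).filter RedP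

/-- Cyclically reduced words of length `n`. -/
def CW (r n : ℕ) : Finset (List (Fin r × Bool)) := (RW r n).filter CycP

/-- Reduced words of length `n` avoiding `[x, y]` as an infix. -/
def AW (x y : Fin r × Bool) (n : ℕ) : Finset (List (Fin r × Bool)) :=
  (RW r n).filter (fun L => ¬ [x, y] <:+: L)

lemma redP_cons {a : Fin r × Bool} {L : List (Fin r × Bool)} :
    RedP (a :: L) ↔ (∀ b ∈ L.head?, b ≠ bar a) ∧ RedP L := List.isChain_cons

/-- Extensions on the left. -/
def extL {r : ℕ} (L : List (Fin r × Bool)) : Finset (Fin r × Bool) :=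
  Finset.univ.filter (fun a => RedP (a :: L))

lemma card_extL_ge (hr : 1 ≤ r) {n : ℕ} {L : List (Fin r × Bool)} (hL : L ∈ RW r n) :
    2 * r - 1 ≤ (extL L).card := by
  have hred : RedP L := (Finset.mem_filter.1 hL).2
  cases L with
  | nil =>
    have : extL ([] : List (Fin r × Bool)) = Finset.univ := by
      ext a; simp [extL, RedP, List.Chain']
    rw [this, card_univ_letters]; omega
  | cons b t =>
    have key : ∀ a : Fin r × Bool, RedP (a :: b :: t) ↔ b ≠ bar a := fun a =>
      ⟨fun h => (List.isChain_cons_cons.1 h).1, fun h => List.isChain_cons_cons.2 ⟨h, hred⟩⟩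
    have : extL (b :: t) = Finset.univ.erase (bar b) := by
      ext a
      simp only [extL, Finset.mem_filter, Finset.mem_univ, true_and, Finset.mem_erase,
        and_true, key a]
      exact not_congr eq_bar_comm.symm
    rw [this, Finset.card_erase_of_mem (Finset.mem_univ _), card_univ_letters]

lemma card_RW_succ (hr : 1 ≤ r) (n : ℕ) :
    (2 * r - 1) * (RW r n).card ≤ (RW r (n + 1)).card := by
  have hsub : (RW r n).biUnion (fun L => (extL L).image (· :: L)) ⊆ RW r (n + 1) := by
    intro M hM
    simp only [Finset.mem_biUnion, Finset.mem_image] at hM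
    obtain ⟨L, hL, a, ha, rfl⟩ := hM
    have := (Finset.mem_filter.1 hL).1
    refine Finset.mem_filter.2 ⟨mem_allW.2 ?_, (Finset.mem_filter.1 ha).2⟩
    simp [mem_allW.1 this]
  calc (2 * r - 1) * (RW r n).card = ∑ _L ∈ RW r n, (2 * r - 1) := by
        rw [Finset.sum_const, smul_eq_mul, mul_comm]
  _ ≤ ∑ L ∈ RW r n, ((extL L).image (· :: L)).card := by
        refine Finset.sum_le_sum fun L hL => ?_
        rw [Finset.card_image_of_injective _ (fun a b h => by simpa using h)]
        exact card_extL_ge hr hL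
  _ = ((RW r n).biUnion (fun L => (extL L).image (· :: L))).card := by
        refine (Finset.card_biUnion ?_).symm
        intro L₁ h₁ L₂ h₂ hne
        refine Finset.disjoint_left.2 fun M hM₁ hM₂ => hne ?_
        simp only [Finset.mem_image] at hM₁ hM₂
        obtain ⟨a, -, rfl⟩ := hM₁
        obtain ⟨b, -, h⟩ := hM₂
        rw [List.cons.injEq] at h
        exact h.2.symm
  _ ≤ (RW r (n + 1)).card := Finset.card_le_card hsub

lemma card_RW_ge (hr : 1 ≤ r) (n : ℕ) : (2 * r - 1) ^ n ≤ (RW r n).card := by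
  induction n with
  | zero =>
    have : ([] : List (Fin r × Bool)) ∈ RW r 0 :=
      Finset.mem_filter.2 ⟨mem_allW.2 rfl, List.isChain_nil⟩
    simpa using Finset.card_pos.2 ⟨_, this⟩
  | succ n ih =>
    calc (2 * r - 1) ^ (n + 1) = (2 * r - 1) * (2 * r - 1) ^ n := by ring
    _ ≤ (2 * r - 1) * (RW r n).card := Nat.mul_le_mul_left _ ih
    _ ≤ (RW r (n + 1)).card := card_RW_succ hr n

/-- Letters that can be appended to `L` keeping it cyclically reduced. -/
def goodSet {r : ℕ} (L : List (Fin r × Bool)) : Finset (Fin r × Bool) :=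
  Finset.univ.filter (fun c => (∀ b ∈ L.getLast?, c ≠ bar b) ∧ (∀ a ∈ L.head?, a ≠ bar c))

lemma goodSet_nonempty (hr : 2 ≤ r) (L : List (Fin r × Bool)) : (goodSet L).Nonempty := by
  rw [← Finset.card_pos]
  cases L with
  | nil =>
    have : goodSet ([] : List (Fin r × Bool)) = Finset.univ := by
      ext c; simp [goodSet]
    rw [this, card_univ_letters]; omega
  | cons h t =>
    obtain ⟨l, hl⟩ : ∃ l, (h :: t).getLast? = some l :=
      ⟨_, List.getLast?_eq_getLast_of_ne_nil (List.cons_ne_nil _ _)⟩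
    have hsub : Finset.univ \ {bar l, bar h} ⊆ goodSet (h :: t) := by
      intro c hc
      simp only [Finset.mem_sdiff, Finset.mem_insert, Finset.mem_singleton, not_or] at hc
      refine Finset.mem_filter.2 ⟨Finset.mem_univ _, ?_, ?_⟩
      · intro b hb
        rw [hl, Option.mem_def, Option.some.injEq] at hb
        subst hb; exact hc.2.1
      · intro a ha
        simp only [List.head?_cons, Option.mem_def, Option.some.injEq] at ha
        subst ha
        intro hE
        exact hc.2.2 (by rw [hE]; simp [bar])
    have hcard : (Finset.univ \ ({bar l, bar h} : Finset (Fin r × Bool))).card ≥ 2 * r - 2 := by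
      have h1 : ({bar l, bar h} : Finset (Fin r × Bool)).card ≤ 2 :=
        Finset.card_insert_le _ _ |>.trans (by simp)
      have := Finset.le_card_sdiff ({bar l, bar h} : Finset (Fin r × Bool)) Finset.univ
      rw [card_univ_letters] at *
      omega
    have := Finset.card_le_card hsub
    omega

def pick (hr : 2 ≤ r) (L : List (Fin r × Bool)) : Fin r × Bool :=
  (goodSet_nonempty hr L).choose

lemma pick_spec (hr : 2 ≤ r) (L : List (Fin r × Bool)) :
    (∀ b ∈ L.getLast?, pick hr L ≠ bar b) ∧ (∀ a ∈ L.head?, a ≠ bar (pick hr L)) := by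
  have := (goodSet_nonempty hr L).choose_spec
  exact (Finset.mem_filter.1 this).2

lemma card_CW_ge_RW (hr : 2 ≤ r) (n : ℕ) : (RW r n).card ≤ (CW r (n + 1)).card := by
  refine Finset.card_le_card_of_injOn (fun L => L ++ [pick hr L]) ?_ ?_
  · intro L hL
    obtain ⟨hlen, hred⟩ := Finset.mem_filter.1 hL
    set c := pick hr L with hc
    obtain ⟨hp1, hp2⟩ := pick_spec hr L
    have hred' : RedP (L ++ [c]) := by
      refine List.isChain_append.2 ⟨hred, List.isChain_singleton _, ?_⟩
      intro b hb a ha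
      simp only [List.head?_cons, Option.mem_def, Option.some.injEq] at ha
      subst ha
      exact hp1 b hb
    refine Finset.mem_filter.2
      ⟨Finset.mem_filter.2 ⟨mem_allW.2 (by simp [mem_allW.1 hlen]), hred'⟩, ?_⟩
    intro u hu v hv
    rw [List.getLast?_concat, Option.mem_def, Option.some.injEq] at hv
    subst hv
    show u ≠ bar c
    cases L with
    | nil =>
      simp only [List.nil_append, List.head?_cons, Option.mem_def, Option.some.injEq] at hu
      subst hu
      exact (bar_ne_self c).symm
    | cons h t =>
      simp only [List.cons_append, List.head?_cons, Option.mem_def, Option.some.injEq] at hu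
      subst hu
      exact hp2 h (by simp)
  · intro L₁ _ L₂ _ h
    have := congrArg List.dropLast h
    simpa [List.dropLast_concat] using this

lemma key1 {q : ℕ} (h : 1 ≤ q) : (q - 1) + (q - 1) * q = q * q - 1 := by
  obtain ⟨m, rfl⟩ : ∃ m, q = m + 1 := ⟨q - 1, by omega⟩
  have h1 : (m + 1) * (m + 1) = (m + 1) + m * (m + 1) := by ring
  have h2 : m + 1 - 1 = m := by omega
  rw [h1, h2]
  omega

lemma key2 {q : ℕ} (h : 1 ≤ q) : (q * q - 1) + (q - 1) * (q * q) = q ^ 3 - 1 := by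
  obtain ⟨m, rfl⟩ : ∃ m, q = m + 1 := ⟨q - 1, by omega⟩
  have h1 : (m + 1) ^ 3 = (m + 1) * (m + 1) + m * ((m + 1) * (m + 1)) := by ring
  have h2 : m + 1 - 1 = m := by omega
  have h3 : 1 ≤ (m + 1) * (m + 1) := Nat.one_le_iff_ne_zero.2 (by positivity)
  rw [h1, h2]
  omega

lemma key3 {q : ℕ} (h : 3 ≤ q) : 2 * (q * q) ≤ q ^ 3 - 1 := by
  obtain ⟨m, rfl⟩ : ∃ m, q = m + 3 := ⟨q - 3, by omega⟩
  have h1 : (m + 3) ^ 3 = m * ((m + 3) * (m + 3)) + 3 * ((m + 3) * (m + 3)) := by ring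
  have h3 : 1 ≤ (m + 3) * (m + 3) := Nat.one_le_iff_ne_zero.2 (by positivity)
  rw [h1]
  omega

/-- Allowed predecessors of a letter `d`. -/
def nb (x y d : Fin r × Bool) : Finset (Fin r × Bool) :=
  Finset.univ.filter (fun e => d ≠ bar e ∧ (e, d) ≠ (x, y))

lemma card_nb_le (x y d : Fin r × Bool) : (nb x y d).card ≤ 2 * r - 1 := by
  have hsub : nb x y d ⊆ Finset.univ.erase (bar d) := by
    intro e he
    obtain ⟨-, h1, -⟩ := Finset.mem_filter.1 he
    exact Finset.mem_erase.2 ⟨fun h => h1 (eq_bar_comm.1 h), Finset.mem_univ _⟩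
  have := Finset.card_le_card hsub
  rwa [Finset.card_erase_of_mem (Finset.mem_univ _), card_univ_letters] at this

lemma card_nb_y {x y : Fin r × Bool} (hxy : y ≠ bar x) :
    (nb x y y).card ≤ 2 * r - 2 := by
  have hxbar : x ≠ bar y := fun h => hxy (eq_bar_comm.1 h)
  have hsub : nb x y y ⊆ (Finset.univ.erase (bar y)).erase x := by
    intro e he
    obtain ⟨-, h1, h2⟩ := Finset.mem_filter.1 he
    refine Finset.mem_erase.2 ⟨fun h => h2 (by rw [h]), ?_⟩
    exact Finset.mem_erase.2 ⟨fun h => h1 (eq_bar_comm.1 h), Finset.mem_univ _⟩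
  have := Finset.card_le_card hsub
  rwa [Finset.card_erase_of_mem
      (Finset.mem_erase.2 ⟨hxbar, Finset.mem_univ _⟩),
    Finset.card_erase_of_mem (Finset.mem_univ _), card_univ_letters] at this

/-- Triples that can be prepended to a word starting with `h`. -/
def T3 (x y h : Fin r × Bool) : Finset ((Fin r × Bool) × (Fin r × Bool) × (Fin r × Bool)) :=
  (nb x y h).biUnion fun c => (nb x y c).biUnion fun b =>
    (nb x y b).image fun a => (a, b, c)

lemma card_T3_le (hr : 2 ≤ r) {x y : Fin r × Bool} (hxy : y ≠ bar x) (h : Fin r × Bool) :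
    (T3 x y h).card ≤ (2 * r - 1) ^ 3 - 1 := by
  set q := 2 * r - 1 with hq
  have hq3 : 3 ≤ q := by omega
  set f : Fin r × Bool → ℕ := fun c => ∑ b ∈ nb x y c, (nb x y b).card with hf
  have hcard : (T3 x y h).card ≤ ∑ c ∈ nb x y h, f c := by
    refine (Finset.card_biUnion_le).trans (Finset.sum_le_sum fun c _ => ?_)
    refine (Finset.card_biUnion_le).trans (Finset.sum_le_sum fun b _ => ?_)
    exact Finset.card_image_le
  have hf_le : ∀ c, f c ≤ q * q := by
    intro c
    calc f c ≤ ∑ _b ∈ nb x y c, q := Finset.sum_le_sum fun b _ => card_nb_le x y b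
    _ = (nb x y c).card * q := by rw [Finset.sum_const, smul_eq_mul]
    _ ≤ q * q := Nat.mul_le_mul_right _ (card_nb_le x y c)
  have hf_good : ∀ c, y ∈ nb x y c → f c ≤ q * q - 1 := by
    intro c hyc
    have hsplit : f c = (nb x y y).card + ∑ b ∈ (nb x y c).erase y, (nb x y b).card :=
      (Finset.add_sum_erase _ _ hyc).symm
    have h1 : (nb x y y).card ≤ q - 1 := by
      have := card_nb_y hxy; omega
    have h2 : ∑ b ∈ (nb x y c).erase y, (nb x y b).card ≤ (q - 1) * q := by
      calc ∑ b ∈ (nb x y c).erase y, (nb x y b).card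
          ≤ ∑ _b ∈ (nb x y c).erase y, q := Finset.sum_le_sum fun b _ => card_nb_le x y b
      _ = ((nb x y c).erase y).card * q := by rw [Finset.sum_const, smul_eq_mul]
      _ ≤ (q - 1) * q := by
          refine Nat.mul_le_mul_right _ ?_
          have := card_nb_le x y c
          have := Finset.card_erase_of_mem hyc
          omega
    have key := key1 (q := q) (by omega)
    omega
  by_cases hA : ∃ c ∈ nb x y h, y ∈ nb x y c
  · obtain ⟨c₀, hc₀, hyc₀⟩ := hA
    have hsplit : ∑ c ∈ nb x y h, f c
        = f c₀ + ∑ c ∈ (nb x y h).erase c₀, f c := (Finset.add_sum_erase _ _ hc₀).symm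
    have h2 : ∑ c ∈ (nb x y h).erase c₀, f c ≤ (q - 1) * (q * q) := by
      calc ∑ c ∈ (nb x y h).erase c₀, f c ≤ ∑ _c ∈ (nb x y h).erase c₀, q * q :=
            Finset.sum_le_sum fun c _ => hf_le c
      _ = ((nb x y h).erase c₀).card * (q * q) := by rw [Finset.sum_const, smul_eq_mul]
      _ ≤ (q - 1) * (q * q) := by
          refine Nat.mul_le_mul_right _ ?_
          have := card_nb_le x y h
          have := Finset.card_erase_of_mem hc₀
          omega
    have h1 := hf_good c₀ hyc₀
    have key := key2 (q := q) (by omega)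
    omega
  · push_neg at hA
    have hsub : nb x y h ⊆ {bar y, y} := by
      intro c hc
      have hyc := hA c hc
      simp only [nb, Finset.mem_filter, Finset.mem_univ, true_and, not_and_or, not_not,
        ne_eq] at hyc
      rcases hyc with hyc | hyc
      · exact Finset.mem_insert.2 (Or.inl hyc)
      · rw [Prod.mk.injEq] at hyc
        exact Finset.mem_insert.2 (Or.inr (by simp [hyc.2]))
    have hcard2 : (nb x y h).card ≤ 2 :=
      (Finset.card_le_card hsub).trans ((Finset.card_insert_le _ _).trans (by simp))
    have hsum : ∑ c ∈ nb x y h, f c ≤ 2 * (q * q) := by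
      calc ∑ c ∈ nb x y h, f c ≤ ∑ _c ∈ nb x y h, q * q := Finset.sum_le_sum fun c _ => hf_le c
      _ = (nb x y h).card * (q * q) := by rw [Finset.sum_const, smul_eq_mul]
      _ ≤ 2 * (q * q) := Nat.mul_le_mul_right _ hcard2
    have key := key3 (q := q) hq3
    omega

lemma card_AW_rec (hr : 2 ≤ r) {x y : Fin r × Bool} (hxy : y ≠ bar x) {n : ℕ} (hn : 1 ≤ n) :
    (AW x y (n + 3)).card ≤ ((2 * r - 1) ^ 3 - 1) * (AW x y n).card := by
  have hmaps : ∀ L ∈ AW x y (n + 3), L.drop 3 ∈ AW x y n := by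
    intro L hL
    obtain ⟨hL1, hL2⟩ := Finset.mem_filter.1 hL
    obtain ⟨hlen, hred⟩ := Finset.mem_filter.1 hL1
    refine Finset.mem_filter.2 ⟨Finset.mem_filter.2 ⟨mem_allW.2 ?_, hred.drop 3⟩, ?_⟩
    · rw [List.length_drop, mem_allW.1 hlen]; omega
    · intro hinf
      exact hL2 (hinf.trans (List.drop_suffix 3 L).isInfix)
  refine Finset.card_le_mul_card_image_of_maps_to hmaps _ ?_
  intro R hR
  obtain ⟨hR1, -⟩ := Finset.mem_filter.1 hR
  obtain ⟨hRlen, -⟩ := Finset.mem_filter.1 hR1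
  have hRlen' : R.length = n := mem_allW.1 hRlen
  obtain ⟨h, R', rfl⟩ : ∃ h R', R = h :: R' := by
    cases R with
    | nil => simp at hRlen'; omega
    | cons a t => exact ⟨a, t, rfl⟩
  have hjunk : (0 : ℕ) < r := by omega
  refine (Finset.card_le_card_of_injOn
      (fun L => (L.getD 0 (⟨0, hjunk⟩, true), L.getD 1 (⟨0, hjunk⟩, true),
        L.getD 2 (⟨0, hjunk⟩, true))) ?_ ?_).trans (card_T3_le hr hxy h)
  · intro L hL
    obtain ⟨hL', hdrop⟩ := Finset.mem_filter.1 hL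
    obtain ⟨hL1, hL2⟩ := Finset.mem_filter.1 hL'
    obtain ⟨hlen, hred⟩ := Finset.mem_filter.1 hL1
    have hlen' : L.length = n + 3 := mem_allW.1 hlen
    obtain ⟨a, b, c, M, rfl⟩ : ∃ a b c M, L = a :: b :: c :: M := by
      rcases L with _ | ⟨a, _ | ⟨b, _ | ⟨c, M⟩⟩⟩ <;> simp_all <;> omega
    have hM : M = h :: R' := hdrop
    subst hM
    have c1 : b ≠ bar a := (List.isChain_cons_cons.1 hred).1
    have c2 : c ≠ bar b := (List.isChain_cons_cons.1 (List.isChain_cons_cons.1 hred).2).1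
    have c3 : h ≠ bar c :=
      (List.isChain_cons_cons.1 (List.isChain_cons_cons.1 (List.isChain_cons_cons.1 hred).2).2).1
    have p1 : (a, b) ≠ (x, y) := by
      rintro h'
      rw [Prod.mk.injEq] at h'
      exact hL2 ⟨[], c :: h :: R', by simp [h'.1, h'.2]⟩
    have p2 : (b, c) ≠ (x, y) := by
      rintro h'
      rw [Prod.mk.injEq] at h'
      exact hL2 ⟨[a], h :: R', by simp [h'.1, h'.2]⟩
    have p3 : (c, h) ≠ (x, y) := by
      rintro h'
      rw [Prod.mk.injEq] at h'
      exact hL2 ⟨[a, b], R', by simp [h'.1, h'.2]⟩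
    simp only [List.getD_cons_zero, List.getD_cons_succ]
    simp only [Finset.mem_coe, T3, Finset.mem_biUnion, Finset.mem_image]
    refine ⟨c, ?_, b, ?_, a, ?_, rfl⟩
    · exact Finset.mem_filter.2 ⟨Finset.mem_univ _, c3, p3⟩
    · exact Finset.mem_filter.2 ⟨Finset.mem_univ _, c2, p2⟩
    · exact Finset.mem_filter.2 ⟨Finset.mem_univ _, c1, p1⟩
  · intro L₁ hL₁ L₂ hL₂ heq
    obtain ⟨hL₁', hdrop₁⟩ := Finset.mem_filter.1 hL₁
    obtain ⟨hL₂', hdrop₂⟩ := Finset.mem_filter.1 hL₂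
    obtain ⟨hlen₁, -⟩ := Finset.mem_filter.1 (Finset.mem_filter.1 hL₁').1
    obtain ⟨hlen₂, -⟩ := Finset.mem_filter.1 (Finset.mem_filter.1 hL₂').1
    have hlen₁' : L₁.length = n + 3 := mem_allW.1 hlen₁
    have hlen₂' : L₂.length = n + 3 := mem_allW.1 hlen₂
    obtain ⟨a₁, b₁, c₁, M₁, rfl⟩ : ∃ a b c M, L₁ = a :: b :: c :: M := by
      rcases L₁ with _ | ⟨a, _ | ⟨b, _ | ⟨c, M⟩⟩⟩ <;> simp_all <;> omega
    obtain ⟨a₂, b₂, c₂, M₂, rfl⟩ : ∃ a b c M, L₂ = a :: b :: c :: M := by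
      rcases L₂ with _ | ⟨a, _ | ⟨b, _ | ⟨c, M⟩⟩⟩ <;> simp_all <;> omega
    simp only [List.getD_cons_zero, List.getD_cons_succ, Prod.mk.injEq] at heq
    have hM : M₁ = M₂ := by
      have h1 : M₁ = h :: R' := hdrop₁
      have h2 : M₂ = h :: R' := hdrop₂
      rw [h1, h2]
    rw [heq.1, heq.2.1, heq.2.2, hM]

lemma card_AW_le (hr : 2 ≤ r) {x y : Fin r × Bool} (hxy : y ≠ bar x) (n : ℕ) :
    (AW x y n).card ≤ (2 * r) ^ 3 * ((2 * r - 1) ^ 3 - 1) ^ (n / 3) := by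
  induction n using Nat.strong_induction_on with
  | _ n ih =>
    by_cases hn : n ≤ 3
    · have h1 : (AW x y n).card ≤ (2 * r) ^ n := by
        refine (Finset.card_le_card ?_).trans (card_allW_le n)
        intro L hL
        exact (Finset.mem_filter.1 (Finset.mem_filter.1 hL).1).1
      have h2 : (2 * r) ^ n ≤ (2 * r) ^ 3 := Nat.pow_le_pow_right (by omega) hn
      have h3 : 1 ≤ ((2 * r - 1) ^ 3 - 1) ^ (n / 3) := by
        refine Nat.one_le_pow _ _ ?_
        have h4 : 3 ≤ 2 * r - 1 := by omega
        have : 27 ≤ (2 * r - 1) ^ 3 := by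
          calc (27 : ℕ) = 3 ^ 3 := by norm_num
          _ ≤ (2 * r - 1) ^ 3 := Nat.pow_le_pow_left h4 3
        omega
      calc (AW x y n).card ≤ (2 * r) ^ 3 := h1.trans h2
      _ = (2 * r) ^ 3 * 1 := (mul_one _).symm
      _ ≤ _ := Nat.mul_le_mul_left _ h3
    · push_neg at hn
      obtain ⟨m, rfl⟩ : ∃ m, n = m + 3 := ⟨n - 3, by omega⟩
      have hm : 1 ≤ m := by omega
      calc (AW x y (m + 3)).card ≤ ((2 * r - 1) ^ 3 - 1) * (AW x y m).card :=
            card_AW_rec hr hxy hm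
      _ ≤ ((2 * r - 1) ^ 3 - 1) * ((2 * r) ^ 3 * ((2 * r - 1) ^ 3 - 1) ^ (m / 3)) :=
            Nat.mul_le_mul_left _ (ih m (by omega))
      _ = (2 * r) ^ 3 * ((2 * r - 1) ^ 3 - 1) ^ (m / 3 + 1) := by ring
      _ = (2 * r) ^ 3 * ((2 * r - 1) ^ 3 - 1) ^ ((m + 3) / 3) := by
            rw [Nat.add_div_right m (by norm_num)]

lemma injOn_mk_redP (s : Set (List (Fin r × Bool))) (hs : ∀ L ∈ s, RedP L) :
    Set.InjOn (FreeGroup.mk : List (Fin r × Bool) → F r) s := by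
  intro L₁ h₁ L₂ h₂ h
  rw [← toWord_mk_of_redP (hs L₁ h₁), ← toWord_mk_of_redP (hs L₂ h₂), h]

lemma finite_wlen_le (S : Set (F r)) (n : ℕ) : {w ∈ S | wlen w ≤ n}.Finite := by
  have hsub : {w ∈ S | wlen w ≤ n} ⊆
      FreeGroup.mk '' ↑((Finset.range (n + 1)).biUnion (RW r)) := by
    rintro w ⟨-, hw⟩
    refine ⟨FreeGroup.toWord w, ?_, FreeGroup.mk_toWord⟩
    simp only [Finset.coe_biUnion, Finset.mem_coe, Finset.mem_range, Set.mem_iUnion]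
    exact ⟨wlen w, by omega,
      Finset.mem_filter.2 ⟨mem_allW.2 rfl, redP_toWord w⟩⟩
  exact Set.Finite.subset (Set.Finite.image _ (Finset.finite_toSet _)) hsub

lemma rho_le_rho_of_subset {S T : Set (F r)} (h : S ⊆ T) (n : ℕ) : rho S n ≤ rho T n :=
  Set.ncard_le_ncard (fun w hw => ⟨h hw.1, hw.2⟩) (finite_wlen_le T n)

lemma rho_mono (S : Set (F r)) {m n : ℕ} (h : m ≤ n) : rho S m ≤ rho S n :=
  Set.ncard_le_ncard (fun w hw => ⟨hw.1, hw.2.trans h⟩) (finite_wlen_le S n)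

/-- Upper bound on the number of bad elements. -/
lemma rho_bad_le (x y : Fin r × Bool) (n : ℕ) :
    rho {w : F r | CyclicallyReduced w ∧ ¬ [x, y] <:+: FreeGroup.toWord w} n
      ≤ ∑ k ∈ Finset.range (n + 1), (AW x y k).card := by
  set Fn := (Finset.range (n + 1)).biUnion (AW x y) with hFn
  have hsub : {w ∈ {w : F r | CyclicallyReduced w ∧ ¬ [x, y] <:+: FreeGroup.toWord w} |
      wlen w ≤ n} ⊆ FreeGroup.mk '' ↑Fn := by
    rintro w ⟨⟨-, hinf⟩, hlen⟩
    refine ⟨FreeGroup.toWord w, ?_, FreeGroup.mk_toWord⟩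
    simp only [hFn, Finset.coe_biUnion, Finset.mem_coe, Finset.mem_range, Set.mem_iUnion]
    refine ⟨wlen w, by omega, Finset.mem_filter.2
      ⟨Finset.mem_filter.2 ⟨mem_allW.2 rfl, redP_toWord w⟩, hinf⟩⟩
  calc rho _ n ≤ (FreeGroup.mk '' ↑Fn).ncard :=
        Set.ncard_le_ncard hsub (Set.Finite.image _ (Finset.finite_toSet _))
  _ ≤ (↑Fn : Set (List (Fin r × Bool))).ncard :=
        Set.ncard_image_le (Finset.finite_toSet _)
  _ = Fn.card := Set.ncard_coe_finset _
  _ ≤ ∑ k ∈ Finset.range (n + 1), (AW x y k).card := Finset.card_biUnion_le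

/-- Lower bound on the number of cyclically reduced elements. -/
lemma rho_Ur_ge (n : ℕ) : (CW r n).card ≤ rho (Ur r) n := by
  have hred : ∀ L ∈ (↑(CW r n) : Set (List (Fin r × Bool))), RedP L := by
    intro L hL
    rw [Finset.mem_coe, CW, Finset.mem_filter, RW, Finset.mem_filter] at hL
    exact hL.1.2
  have hsub : FreeGroup.mk '' ↑(CW r n) ⊆ {w ∈ Ur r | wlen w ≤ n} := by
    rintro w ⟨L, hL, rfl⟩
    have hredL := hred L hL
    rw [Finset.mem_coe, CW, Finset.mem_filter] at hL
    obtain ⟨hL1, hcyc⟩ := hL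
    rw [RW, Finset.mem_filter] at hL1
    have htw : FreeGroup.toWord (FreeGroup.mk L) = L := toWord_mk_of_redP hredL
    constructor
    · show CyclicallyReduced _
      unfold CyclicallyReduced
      rw [htw]
      exact hcyc
    · show wlen _ ≤ n
      unfold wlen
      rw [htw, mem_allW.1 hL1.1]
  calc (CW r n).card = (↑(CW r n) : Set (List (Fin r × Bool))).ncard :=
        (Set.ncard_coe_finset _).symm
  _ = (FreeGroup.mk '' ↑(CW r n)).ncard :=
        (Set.ncard_image_of_injOn (injOn_mk_redP _ hred)).symm
  _ ≤ rho (Ur r) n := Set.ncard_le_ncard hsub (finite_wlen_le _ n)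

lemma one_le_rho_Ur (n : ℕ) : 1 ≤ rho (Ur r) n := by
  have h0 : ([] : List (Fin r × Bool)) ∈ CW r 0 := by
    refine Finset.mem_filter.2 ⟨Finset.mem_filter.2 ⟨mem_allW.2 rfl, List.isChain_nil⟩, ?_⟩
    intro u hu
    simp at hu
  calc 1 ≤ (CW r 0).card := Finset.card_pos.2 ⟨_, h0⟩
  _ ≤ rho (Ur r) 0 := rho_Ur_ge 0
  _ ≤ rho (Ur r) n := rho_mono _ (Nat.zero_le n)

lemma sum_pow_le_two_pow {t : ℝ} (ht : 2 ≤ t) (n : ℕ) :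
    ∑ k ∈ Finset.range (n + 1), t ^ k ≤ 2 * t ^ n := by
  induction n with
  | zero => norm_num
  | succ n ih =>
    rw [Finset.sum_range_succ]
    have h1 : (0:ℝ) ≤ t ^ n := by positivity
    have : 2 * t ^ n ≤ t * t ^ n := by nlinarith
    calc ∑ k ∈ Finset.range (n + 1), t ^ k + t ^ (n + 1) ≤ 2 * t ^ n + t ^ (n + 1) := by
          linarith
    _ ≤ t * t ^ n + t ^ (n + 1) := by linarith
    _ = 2 * t ^ (n + 1) := by ring

lemma cube_root_facts {μ q : ℕ} (hμ8 : 8 ≤ μ) (hμq : μ + 1 = q ^ 3) :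
    ∃ t : ℝ, 2 ≤ t ∧ t < q ∧ t ^ (3 : ℕ) = μ := by
  set t : ℝ := (μ : ℝ) ^ ((3 : ℝ)⁻¹) with hT
  have hμ0 : (0:ℝ) ≤ (μ : ℝ) := Nat.cast_nonneg _
  have hcube : t ^ (3 : ℕ) = (μ : ℝ) := by
    rw [hT, ← Real.rpow_natCast ((μ : ℝ) ^ ((3:ℝ)⁻¹)) 3, ← Real.rpow_mul hμ0]
    norm_num
  have ht0 : 0 ≤ t := Real.rpow_nonneg hμ0 _
  refine ⟨t, ?_, ?_, hcube⟩
  · by_contra hlt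
    push_neg at hlt
    have : t ^ (3:ℕ) < 2 ^ (3:ℕ) := by
      apply pow_lt_pow_left₀ hlt ht0
      norm_num
    rw [hcube] at this
    norm_num at this
    have : (8 : ℝ) ≤ (μ : ℝ) := by exact_mod_cast hμ8
    linarith
  · by_contra hle
    push_neg at hle
    have h1 : ((q:ℝ)) ^ (3:ℕ) ≤ t ^ (3:ℕ) := pow_le_pow_left₀ (by positivity) hle 3
    rw [hcube] at h1
    have h2 : ((μ : ℕ) : ℝ) + 1 = ((q:ℝ)) ^ (3:ℕ) := by exact_mod_cast hμq
    linarith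

end GTL


/-- For every freely reduced two-letter word `z = xy`, the set of
cyclically reduced words containing `z` as a subword is exponentially generic in `U_r`. -/
theorem generic_contains_two_letter_subword (r : ℕ) (hr : 2 ≤ r)
    (x y : Fin r × Bool) (hxy : y ≠ (x.1, !x.2)) :
    ExpGenericIn {w : F r | CyclicallyReduced w ∧ [x, y] <:+: FreeGroup.toWord w}
      (Ur r) := by
  classical
  have hxy' : y ≠ GTL.bar x := hxy
  have hdiff : Ur r \ {w : F r | CyclicallyReduced w ∧ [x, y] <:+: FreeGroup.toWord w}
      = {w : F r | CyclicallyReduced w ∧ ¬ [x, y] <:+: FreeGroup.toWord w} := by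
    ext w
    simp only [Set.mem_diff, Set.mem_setOf_eq, Ur]
    tauto
  rw [ExpGenericIn, hdiff]
  rw [ExpNegligibleIn, ExpFast]
  -- numeric setup
  have hq3 : 3 ≤ 2 * r - 1 := by omega
  have h27 : 27 ≤ (2 * r - 1) ^ 3 := by
    calc (27 : ℕ) = 3 ^ 3 := by norm_num
    _ ≤ (2 * r - 1) ^ 3 := Nat.pow_le_pow_left hq3 3
  obtain ⟨t, ht2, htq, ht3⟩ := GTL.cube_root_facts
    (μ := (2 * r - 1) ^ 3 - 1) (q := 2 * r - 1) (by omega) (by omega)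
  have ht0 : (0:ℝ) < t := lt_of_lt_of_le two_pos ht2
  have ht1 : (1:ℝ) ≤ t := by linarith
  set Q : ℝ := ((2 * r - 1 : ℕ) : ℝ) with hQ
  have hQ3 : (3:ℝ) ≤ Q := by rw [hQ]; exact_mod_cast hq3
  have hQ0 : (0:ℝ) < Q := by linarith
  set A : ℝ := (((2 * r) ^ 3 : ℕ) : ℝ) with hA
  have hA0 : (0:ℝ) ≤ A := Nat.cast_nonneg _
  set σ : ℝ := t / Q with hσ
  have hσ0 : 0 < σ := div_pos ht0 hQ0
  have hσ1 : σ < 1 := (div_lt_one hQ0).2 htq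
  set C : ℝ := max (2 * A * Q) 1 with hC
  have hC1 : (1:ℝ) ≤ C := le_max_right _ _
  refine ⟨C, by linarith, σ, hσ0, hσ1, ?_⟩
  intro n
  -- denominator positivity
  have hden1 : (1:ℝ) ≤ (rho (Ur r) n : ℝ) := by exact_mod_cast GTL.one_le_rho_Ur n
  have hden0 : (0:ℝ) < (rho (Ur r) n : ℝ) := by linarith
  have hnum0 : (0:ℝ) ≤ (rho {w : F r | CyclicallyReduced w ∧
      ¬ [x, y] <:+: FreeGroup.toWord w} n : ℝ) := Nat.cast_nonneg _
  rw [sub_zero, abs_of_nonneg (div_nonneg hnum0 (le_of_lt hden0))]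
  have hσpow : (0:ℝ) ≤ σ ^ n := le_of_lt (pow_pos hσ0 n)
  cases n with
  | zero =>
    have hsub : {w : F r | CyclicallyReduced w ∧ ¬ [x, y] <:+: FreeGroup.toWord w}
        ⊆ Ur r := fun w hw => hw.1
    have h1 : (rho {w : F r | CyclicallyReduced w ∧ ¬ [x, y] <:+: FreeGroup.toWord w} 0 : ℝ)
        ≤ (rho (Ur r) 0 : ℝ) := by exact_mod_cast GTL.rho_le_rho_of_subset hsub 0
    calc (rho _ 0 : ℝ) / (rho (Ur r) 0 : ℝ) ≤ 1 := (div_le_one hden0).2 h1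
    _ ≤ C * σ ^ 0 := by
        rw [pow_zero, mul_one]
        exact hC1
  | succ m =>
    -- numerator bound
    have hnum_nat : rho {w : F r | CyclicallyReduced w ∧ ¬ [x, y] <:+: FreeGroup.toWord w}
        (m + 1) ≤ ∑ k ∈ Finset.range (m + 2),
          (2 * r) ^ 3 * ((2 * r - 1) ^ 3 - 1) ^ (k / 3) := by
      refine (GTL.rho_bad_le x y (m + 1)).trans (Finset.sum_le_sum fun k _ => ?_)
      exact GTL.card_AW_le hr hxy' k
    have hterm : ∀ k : ℕ, ((((2 * r - 1) ^ 3 - 1 : ℕ) ^ (k / 3) : ℕ) : ℝ) ≤ t ^ k := by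
      intro k
      have h1 : ((((2 * r - 1) ^ 3 - 1 : ℕ) ^ (k / 3) : ℕ) : ℝ)
          = (((2 * r - 1) ^ 3 - 1 : ℕ) : ℝ) ^ (k / 3) := by push_cast; ring
      rw [h1, ← ht3, ← pow_mul]
      refine pow_le_pow_right₀ ht1 ?_
      calc 3 * (k / 3) = k / 3 * 3 := by ring
      _ ≤ k := Nat.div_mul_le_self k 3
    have hnum : (rho {w : F r | CyclicallyReduced w ∧ ¬ [x, y] <:+: FreeGroup.toWord w}
        (m + 1) : ℝ) ≤ 2 * A * t ^ (m + 1) := by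
      calc (rho _ (m + 1) : ℝ)
          ≤ ((∑ k ∈ Finset.range (m + 2),
              (2 * r) ^ 3 * ((2 * r - 1) ^ 3 - 1) ^ (k / 3) : ℕ) : ℝ) := by
            exact_mod_cast hnum_nat
      _ = A * ∑ k ∈ Finset.range (m + 2), ((((2 * r - 1) ^ 3 - 1 : ℕ) ^ (k / 3) : ℕ) : ℝ) := by
            rw [Finset.mul_sum, Nat.cast_sum]
            refine Finset.sum_congr rfl fun k _ => ?_
            rw [Nat.cast_mul, hA]
      _ ≤ A * ∑ k ∈ Finset.range (m + 2), t ^ k := by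
            refine mul_le_mul_of_nonneg_left (Finset.sum_le_sum fun k _ => hterm k) hA0
      _ ≤ A * (2 * t ^ (m + 1)) :=
            mul_le_mul_of_nonneg_left (GTL.sum_pow_le_two_pow ht2 (m + 1)) hA0
      _ = 2 * A * t ^ (m + 1) := by ring
    -- denominator bound
    have hden_nat : (2 * r - 1) ^ m ≤ rho (Ur r) (m + 1) :=
      (GTL.card_RW_ge (by omega) m).trans
        ((GTL.card_CW_ge_RW hr m).trans (GTL.rho_Ur_ge (m + 1)))
    have hden : Q ^ m ≤ (rho (Ur r) (m + 1) : ℝ) := by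
      rw [hQ]
      exact_mod_cast hden_nat
    have hQm0 : (0:ℝ) < Q ^ m := pow_pos hQ0 m
    have hstep : (rho {w : F r | CyclicallyReduced w ∧ ¬ [x, y] <:+: FreeGroup.toWord w}
        (m + 1) : ℝ) / (rho (Ur r) (m + 1) : ℝ) ≤ (2 * A * t ^ (m + 1)) / Q ^ m := by
      refine div_le_div₀ (by positivity) hnum hQm0 hden
    have heq : (2 * A * t ^ (m + 1)) / Q ^ m = (2 * A * Q) * σ ^ (m + 1) := by
      rw [hσ, div_pow]
      field_simp
      ring
    calc (rho _ (m + 1) : ℝ) / (rho (Ur r) (m + 1) : ℝ)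
        ≤ (2 * A * t ^ (m + 1)) / Q ^ m := hstep
    _ = (2 * A * Q) * σ ^ (m + 1) := heq
    _ ≤ C * σ ^ (m + 1) := mul_le_mul_of_nonneg_right (le_max_left _ _) hσpow
end
end
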